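/- Let p > 1, R ≥ 1, T > 0, and let a, b ∈ ℝ satisfy one of the regimes: (a > 0, p(1+a)+b > 0), (a = 0, b ≥ −p), (a > 0, p(1+a)+b = 0), (a < 0, b ≥ −p), or (p(1+a)+b < 0, b < −p). Define I₊(x,t) := ∫₀ᵗ w(x+t−s, s)^{−p} χ₊(x,t;s) / ((1+s+|t−s+x|)^{1+a} (1+|s−|t−s+x||)^{1+b}) ds, where χ₊(x,t;s) = 1 if |t−s+x| ≤ s+R and 0 otherwise. Then there exists a constant C > 0, independent of T, such that for all (x,t) with 0 ≤ x ≤ t+R and 0 ≤ t ≤ T: I₊(x,t) ≤ C E_{a,b}(T) w(x,t)^{−1}. -/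

import Mathlib

open MeasureTheory Set
open scoped Classical

/-- Japanese bracket `⟨x⟩ = √(1+x²)`. -/
noncomputable def jb (x : ℝ) : ℝ := Real.sqrt (1 + x ^ 2)

/-- The operator `L'_{a,b}`. -/
noncomputable def Lab' (a b : ℝ) (v : ℝ → ℝ → ℝ) (x t : ℝ) : ℝ :=
    (1 / 2) * (∫ s in (0:ℝ)..t,
      v (x + t - s) s /
        (jb (s + jb (x + t - s)) ^ (1 + a) * jb (s - jb (x + t - s)) ^ (1 + b)))
  + (1 / 2) * (∫ s in (0:ℝ)..t,
      v (x - t + s) s /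
        (jb (s + jb (x - t + s)) ^ (1 + a) * jb (s - jb (x - t + s)) ^ (1 + b)))

/-- `u_t⁰(x,t) = (1/2){f'(x+t) − f'(x−t) + g(x+t) + g(x−t)}`. -/
noncomputable def ut0 (f g : ℝ → ℝ) (x t : ℝ) : ℝ :=
  (1 / 2) * (deriv f (x + t) - deriv f (x - t) + g (x + t) + g (x - t))

/-- Indicator `χ(x,t)` of the region `t − |x| > R`. -/
noncomputable def chiR (R x t : ℝ) : ℝ := if R < t - |x| then 1 else 0

/-- The weight function `w(x,t)`. -/
noncomputable def wgt (a R x t : ℝ) : ℝ :=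
  if 0 < a then chiR R x t * (1 + t - |x|) ^ (1 + a) + (1 - chiR R x t)
  else if a = 0 then
    chiR R x t * (1 + t - |x|) + (1 - chiR R x t) / Real.log (t + |x| + R)
  else if -1 ≤ a then
    chiR R x t * (1 + t - |x|) ^ (1 + a) + (1 - chiR R x t) * (t + |x| + R) ^ a
  else chiR R x t * (1 + t + |x|) ^ (1 + a) + (1 - chiR R x t) * (t + |x| + R) ^ a

/-- The weighted sup-norm `‖U‖ = sup_{ℝ×[0,T]} |w(x,t)U(x,t)|`. -/
noncomputable def wnorm (a R T : ℝ) (U : ℝ → ℝ → ℝ) : ℝ :=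
  ⨆ q : ℝ × Set.Icc (0:ℝ) T, |wgt a R q.1 (q.2 : ℝ) * U q.1 (q.2 : ℝ)|

/-- The quantity `E_{a,b}(T)`. -/
noncomputable def Eab (p a b R T : ℝ) : ℝ :=
  if 0 < a ∧ 0 < p * (1 + a) + b then 1
  else if a = 0 ∧ -p ≤ b then Real.log (T + 3 * R) ^ p
  else if 0 < a ∧ p * (1 + a) + b = 0 then Real.log (T + 3 * R)
  else if a < 0 ∧ -p ≤ b then (T + 2 * R) ^ (-(a * p))
  else (T + 2 * R) ^ (-(p * (1 + a)) - b)

/-- The quantity `D_a(T)`. -/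
noncomputable def Da (a R T : ℝ) : ℝ :=
  if 0 < a then 1
  else if a = 0 then Real.log (T + 3 * R)
  else (T + 2 * R) ^ (-a)

/-- The five regimes of parameters `(a,b)` appearing in the lifespan estimates. -/
def Regime (p a b : ℝ) : Prop :=
  (0 < a ∧ 0 < p * (1 + a) + b) ∨ (a = 0 ∧ -p ≤ b) ∨
  (0 < a ∧ p * (1 + a) + b = 0) ∨ (a < 0 ∧ -p ≤ b) ∨
  (p * (1 + a) + b < 0 ∧ b < -p)

/-- `u` is a classical solution of the IVP
`u_tt − u_xx = |u_t|^p / (⟨t+⟨x⟩⟩^{1+a}⟨t−⟨x⟩⟩^{1+b})` on `ℝ × [0,T]`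
with data `u(x,0) = εf(x)`, `u_t(x,0) = εg(x)`. -/
def IsClassicalSol (p a b ε T : ℝ) (f g : ℝ → ℝ) (u : ℝ → ℝ → ℝ) : Prop :=
  ContDiffOn ℝ 2 (fun q : ℝ × ℝ => u q.1 q.2)
    ((Set.univ : Set ℝ) ×ˢ Set.Icc (0:ℝ) T) ∧
  (∀ x t : ℝ, 0 < t → t < T →
    deriv (deriv (fun τ => u x τ)) t - deriv (deriv (fun y => u y t)) x
      = |deriv (fun τ => u x τ) t| ^ p /
          (jb (t + jb x) ^ (1 + a) * jb (t - jb x) ^ (1 + b))) ∧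
  (∀ x : ℝ, u x 0 = ε * f x) ∧
  (∀ x : ℝ, deriv (fun τ => u x τ) 0 = ε * g x)

/-- `U` is a continuous solution, supported in `{|x| ≤ t+R}`, of the integral
equation `U = ε u_t⁰ + L'_{a,b}(|U|^p)` on `ℝ × [0,T]`. -/
def IsIntSol (p a b R ε T : ℝ) (f g : ℝ → ℝ) (U : ℝ → ℝ → ℝ) : Prop :=
  ContinuousOn (fun q : ℝ × ℝ => U q.1 q.2)
    ((Set.univ : Set ℝ) ×ˢ Set.Icc (0:ℝ) T) ∧
  (∀ x t : ℝ, 0 ≤ t → t ≤ T → t + R < |x| → U x t = 0) ∧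
  (∀ x t : ℝ, 0 ≤ t → t ≤ T →
    U x t = ε * ut0 f g x t + Lab' a b (fun y s => |U y s| ^ p) x t)

/-- The integral `I₊(x,t)`. -/
noncomputable def Iplus (p a b R x t : ℝ) : ℝ :=
  ∫ s in (0:ℝ)..t,
    wgt a R (x + t - s) s ^ (-p) * (if |t - s + x| ≤ s + R then (1:ℝ) else 0) /
      ((1 + s + |t - s + x|) ^ (1 + a) * (1 + (abs (s - |t - s + x|))) ^ (1 + b))

noncomputable def IK (p a R β : ℝ) : ℝ :=
  if 0 < a then 1 else if a = 0 then Real.log (β + R) ^ p else (β + R) ^ (-(a * p))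

noncomputable def IE (p a b : ℝ) : ℝ :=
  if -1 ≤ a then -(1 + (p * (1 + a) + b)) else -(1 + b)

noncomputable def IPf (p a β : ℝ) : ℝ := if -1 ≤ a then 1 else (1 + β) ^ (-(p * (1 + a)))

noncomputable def IPhi (p a b δ : ℝ) : ℝ :=
  if IE p a b = -1 then Real.log (1 + δ)
  else if -1 < IE p a b then (1 + δ) ^ (IE p a b + 1) / (IE p a b + 1)
  else 1 / (-(IE p a b + 1))

noncomputable def IM (p a b R x t : ℝ) : ℝ :=
  (1 + (x + t)) ^ (-(1 + a)) *
    (IK p a R (x + t) * (R * (1 + R) ^ max 0 (-(1 + b)))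
      + (if R < t - x then IPf p a (x + t) * IPhi p a b (t - x) / 2 else 0))

lemma wgt_nonneg {a R x t : ℝ} (hR : 1 ≤ R) (ht : 0 ≤ t) : 0 ≤ wgt a R x t := by
  have hl : 0 ≤ Real.log (t + |x| + R) :=
    Real.log_nonneg (by have := abs_nonneg x; linarith)
  have hb : (0:ℝ) < t + |x| + R := by have := abs_nonneg x; linarith
  have hax := abs_nonneg x
  unfold wgt chiR
  split_ifs with h1 h2 h3 h4 h5 h6 h7 <;> simp_all <;>
    first
    | positivity
    | (apply Real.rpow_nonneg; linarith)
    | linarith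

lemma wgt_eq_of_le {a R X t : ℝ} (hX : 0 ≤ X) (h : t - X ≤ R) :
    wgt a R X t = if 0 < a then 1 else if a = 0 then (Real.log (t + X + R))⁻¹
      else (t + X + R) ^ a := by
  have hx : |X| = X := abs_of_nonneg hX
  have hc : chiR R X t = 0 := by unfold chiR; rw [if_neg]; rw [hx]; linarith
  unfold wgt
  rw [hc, hx]
  split_ifs <;> ring_nf <;> simp [one_div]

lemma wgt_eq_of_gt {a R X t : ℝ} (hX : 0 ≤ X) (h : R < t - X) :
    wgt a R X t = if -1 ≤ a then (1 + t - X) ^ (1 + a) else (1 + t + X) ^ (1 + a) := by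
  have hx : |X| = X := abs_of_nonneg hX
  have hc : chiR R X t = 1 := by unfold chiR; rw [if_pos]; rw [hx]; linarith
  unfold wgt
  rw [hc, hx]
  split_ifs with h1 h2 h3 h4 h5 <;> first
    | (exfalso; linarith)
    | (subst h3; rw [add_zero, Real.rpow_one]; ring_nf)
    | ring_nf

lemma wgt_rpow_near {p a R X s : ℝ} (hR : 1 ≤ R) (hX : 0 ≤ X) (hs : 0 ≤ s)
    (h : s - X ≤ R) : wgt a R X s ^ (-p) = IK p a R (s + X) := by
  have hbase : (0:ℝ) ≤ s + X + R := by linarith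
  rw [wgt_eq_of_le hX h]
  unfold IK
  split_ifs with h1 h2
  · exact Real.one_rpow _
  · have hl : 0 ≤ Real.log (s + X + R) := Real.log_nonneg (by linarith)
    rw [Real.inv_rpow hl, Real.rpow_neg hl, inv_inv]
  · rw [← Real.rpow_mul hbase]
    congr 1
    ring

lemma wgt_rpow_far {p a R X s : ℝ} (hR : 1 ≤ R) (hX : 0 ≤ X) (h : R < s - X) :
    wgt a R X s ^ (-p) =
      if -1 ≤ a then (1 + s - X) ^ (-(p * (1 + a)))
      else (1 + s + X) ^ (-(p * (1 + a))) := by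
  rw [wgt_eq_of_gt hX h]
  split_ifs with h1
  · rw [← Real.rpow_mul (by linarith : (0:ℝ) ≤ 1 + s - X)]
    congr 1; ring
  · rw [← Real.rpow_mul (by linarith : (0:ℝ) ≤ 1 + s + X)]
    congr 1; ring

lemma IK_nonneg {p a R β : ℝ} (hR : 1 ≤ R) (hβ : 0 ≤ β) : 0 ≤ IK p a R β := by
  unfold IK
  have hl : 0 ≤ Real.log (β + R) := Real.log_nonneg (by linarith)
  split_ifs with h1 h2
  · norm_num
  · exact Real.rpow_nonneg hl p
  · exact Real.rpow_nonneg (by linarith) _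

noncomputable def Ifn (p a b R x t s : ℝ) : ℝ :=
  wgt a R (x + t - s) s ^ (-p) * (if |t - s + x| ≤ s + R then (1:ℝ) else 0) /
      ((1 + s + |t - s + x|) ^ (1 + a) * (1 + (abs (s - |t - s + x|))) ^ (1 + b))

noncomputable def Ig (p a b R x t s : ℝ) : ℝ :=
  (1 + (x+t)) ^ (-(1+a)) *
    ((Icc ((x+t-R)/2) ((x+t+R)/2)).indicator
        (fun _ => IK p a R (x+t) * (1+R) ^ max 0 (-(1+b))) s
     + (Ioc ((x+t+R)/2) t).indicator
        (fun u => IPf p a (x+t) * (1 + (2*u - (x+t))) ^ (IE p a b)) s)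

lemma IPf_nonneg (p a β : ℝ) (hβ : 0 ≤ β) : 0 ≤ IPf p a β := by
  unfold IPf; split_ifs
  · norm_num
  · exact Real.rpow_nonneg (by linarith) _

lemma Ig_nonneg (p a b R : ℝ) (hR : 1 ≤ R) {x t s : ℝ} (hx : 0 ≤ x) (ht : 0 ≤ t) :
    0 ≤ Ig p a b R x t s := by
  have hIKn : 0 ≤ IK p a R (x+t) := IK_nonneg hR (by linarith)
  have hLn : (0:ℝ) ≤ (1 + (x+t)) ^ (-(1+a)) := Real.rpow_nonneg (by linarith) _
  apply mul_nonneg hLn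
  apply add_nonneg
  · apply Set.indicator_nonneg; intro y _
    exact mul_nonneg hIKn (Real.rpow_nonneg (by linarith) _)
  · apply Set.indicator_nonneg; intro y hy
    exact mul_nonneg (IPf_nonneg p a _ (by linarith)) (Real.rpow_nonneg (by linarith [hy.1]) _)

lemma Ifn_nonneg (p a b R : ℝ) (hR : 1 ≤ R) {x t s : ℝ} (hs : 0 ≤ s) :
    0 ≤ Ifn p a b R x t s := by
  unfold Ifn
  have h1 : 0 ≤ wgt a R (x + t - s) s ^ (-p) := Real.rpow_nonneg (wgt_nonneg hR hs) _
  have h2 : (0:ℝ) ≤ (1 + s + |t - s + x|) ^ (1 + a) :=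
    Real.rpow_nonneg (by positivity) _
  have h3 : (0:ℝ) ≤ (1 + abs (s - |t - s + x|)) ^ (1 + b) :=
    Real.rpow_nonneg (by positivity) _
  apply div_nonneg _ (mul_nonneg h2 h3)
  apply mul_nonneg h1
  split_ifs <;> norm_num

lemma Ifn_le_Ig (p a b R : ℝ) (hR : 1 ≤ R) {x t s : ℝ}
    (hx : 0 ≤ x) (hs : s ∈ Ioc (0:ℝ) t) : Ifn p a b R x t s ≤ Ig p a b R x t s := by
  obtain ⟨hs0, hst⟩ := hs
  have hX : 0 ≤ x + t - s := by linarith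
  have hab : |t - s + x| = x + t - s := by rw [abs_of_nonneg (by linarith)]; ring
  have hIKn : 0 ≤ IK p a R (x+t) := IK_nonneg hR (by linarith)
  have hL : (0:ℝ) < (1 + (x+t)) ^ (-(1+a)) := Real.rpow_pos_of_pos (by linarith) _
  unfold Ifn Ig
  rw [hab]
  by_cases hsupp : x + t - s ≤ s + R
  · rw [if_pos hsupp]
    by_cases hnear : s ≤ (x+t+R)/2
    · -- near regime
      have hws : s - (x+t-s) ≤ R := by linarith
      rw [wgt_rpow_near hR hX hs0.le hws]
      have e1 : s + (x + t - s) = x + t := by ring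
      have e2 : 1 + s + (x + t - s) = 1 + (x+t) := by ring
      rw [e1, e2]
      rw [Set.indicator_of_mem (show s ∈ Icc ((x+t-R)/2) ((x+t+R)/2) from
        ⟨by linarith, hnear⟩)]
      rw [Set.indicator_of_notMem (show s ∉ Ioc ((x+t+R)/2) t from
        fun hmem => absurd hmem.1 (not_lt.mpr hnear))]
      rw [add_zero, mul_one]
      set m := |s - (x+t-s)| with hm
      have hm0 : 0 ≤ m := abs_nonneg _
      have hmR : m ≤ R := abs_le.mpr ⟨by linarith, by linarith⟩
      rw [div_eq_mul_inv, mul_inv,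
        ← Real.rpow_neg (by linarith : (0:ℝ) ≤ 1 + (x+t)),
        ← Real.rpow_neg (by linarith : (0:ℝ) ≤ 1 + m)]
      have key : (1+m) ^ (-(1+b)) ≤ (1+R) ^ max 0 (-(1+b)) := by
        rcases le_or_gt 0 (1+b) with hb | hb
        · calc (1+m)^(-(1+b)) ≤ 1 :=
              Real.rpow_le_one_of_one_le_of_nonpos (by linarith) (by linarith)
            _ = (1+R) ^ (0:ℝ) := (Real.rpow_zero _).symm
            _ ≤ (1+R) ^ max 0 (-(1+b)) :=
              Real.rpow_le_rpow_of_exponent_le (by linarith) (le_max_left _ _)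
        · rw [max_eq_right (by linarith : (0:ℝ) ≤ -(1+b))]
          exact Real.rpow_le_rpow (by linarith) (by linarith) (by linarith)
      calc IK p a R (x+t) * ((1+(x+t))^(-(1+a)) * (1+m)^(-(1+b)))
          ≤ IK p a R (x+t) * ((1+(x+t))^(-(1+a)) * (1+R)^max 0 (-(1+b))) := by
            have h2 : (0:ℝ) ≤ (1+(x+t))^(-(1+a)) := hL.le
            gcongr
        _ = (1+(x+t))^(-(1+a)) * (IK p a R (x+t) * (1+R)^max 0 (-(1+b))) := by ring
    · -- far regime
      push_neg at hnear
      have hws : R < s - (x+t-s) := by linarith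
      rw [wgt_rpow_far hR hX hws]
      rw [Set.indicator_of_notMem (show s ∉ Icc ((x+t-R)/2) ((x+t+R)/2) from
        fun hmem => absurd hmem.2 (not_le.mpr hnear))]
      rw [Set.indicator_of_mem (show s ∈ Ioc ((x+t+R)/2) t from ⟨hnear, hst⟩)]
      have e2 : 1 + s + (x+t-s) = 1 + (x+t) := by ring
      have habs : |s - (x+t-s)| = 2*s - (x+t) := by
        rw [abs_of_nonneg (by linarith : (0:ℝ) ≤ s - (x+t-s))]; ring
      rw [e2, habs, zero_add]
      have hσ : (0:ℝ) < 1 + (2*s - (x+t)) := by linarith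
      have e3 : 1 + s - (x+t-s) = 1 + (2*s - (x+t)) := by ring
      apply le_of_eq
      split_ifs with ha
      · have hIE : IE p a b = -(1+(p*(1+a)+b)) := by unfold IE; rw [if_pos ha]
        have hIPf : IPf p a (x+t) = 1 := by unfold IPf; rw [if_pos ha]
        rw [hIE, hIPf, e3, one_mul, mul_one, div_eq_mul_inv, mul_inv,
          ← Real.rpow_neg (by linarith : (0:ℝ) ≤ 1 + (x+t)),
          ← Real.rpow_neg hσ.le]
        rw [show (1 + (2*s-(x+t))) ^ (-(p*(1+a))) * ((1+(x+t)) ^ (-(1+a)) *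
              (1 + (2*s-(x+t))) ^ (-(1+b)))
            = (1+(x+t)) ^ (-(1+a)) * ((1 + (2*s-(x+t))) ^ (-(p*(1+a))) *
              (1 + (2*s-(x+t))) ^ (-(1+b))) from by ring]
        rw [← Real.rpow_add hσ]
        congr 2
        ring
      · have hIE : IE p a b = -(1+b) := by unfold IE; rw [if_neg ha]
        have hIPf : IPf p a (x+t) = (1+(x+t)) ^ (-(p*(1+a))) := by
          unfold IPf; rw [if_neg ha]
        rw [hIE, hIPf, mul_one, div_eq_mul_inv, mul_inv,
          ← Real.rpow_neg (by linarith : (0:ℝ) ≤ 1 + (x+t)),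
          ← Real.rpow_neg hσ.le]
        ring
  · rw [if_neg hsupp, mul_zero, zero_div]
    exact Ig_nonneg p a b R hR hx (by linarith)

lemma Iplus_le_IM (p a b R : ℝ) (hR : 1 ≤ R) {x t : ℝ} (hx : 0 ≤ x) (ht : 0 < t) :
    Iplus p a b R x t ≤ IM p a b R x t := by
  have h0t : (0:ℝ) ≤ t := ht.le
  have e0 : Iplus p a b R x t = ∫ s in (0:ℝ)..t, Ifn p a b R x t s := rfl
  rw [e0, intervalIntegral.integral_of_le h0t]
  have hIKn : 0 ≤ IK p a R (x+t) := IK_nonneg hR (by linarith)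
  have hIPfn : 0 ≤ IPf p a (x+t) := IPf_nonneg p a _ (by linarith)
  have hind1 : Integrable ((Icc ((x+t-R)/2) ((x+t+R)/2)).indicator
      (fun _ => IK p a R (x+t) * (1+R) ^ max 0 (-(1+b)))) (volume.restrict (Ioc 0 t)) := by
    rw [integrable_indicator_iff measurableSet_Icc]
    apply (integrableOn_const_iff (C := IK p a R (x+t) * (1+R) ^ max 0 (-(1+b)))).mpr
    right
    calc (volume.restrict (Ioc (0:ℝ) t)) (Icc ((x+t-R)/2) ((x+t+R)/2))
        ≤ volume (Icc ((x+t-R)/2) ((x+t+R)/2)) := Measure.restrict_apply_le _ _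
      _ < ⊤ := measure_Icc_lt_top
  have hcont : IntegrableOn (fun u => IPf p a (x+t) * (1 + (2*u - (x+t))) ^ (IE p a b))
      (Ioc ((x+t+R)/2) t) volume := by
    apply (ContinuousOn.integrableOn_Icc ?_).mono_set Ioc_subset_Icc_self
    apply ContinuousOn.mul continuousOn_const
    apply ContinuousOn.rpow_const
    · fun_prop
    · intro u hu
      left
      have h1 : (x+t+R)/2 ≤ u := hu.1
      have : (0:ℝ) < 1 + (2*u - (x+t)) := by linarith
      exact ne_of_gt this
  have hss : Ioc ((x+t+R)/2) t ⊆ Ioc (0:ℝ) t := Ioc_subset_Ioc (by linarith) le_rfl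
  have hind2 : Integrable ((Ioc ((x+t+R)/2) t).indicator
      (fun u => IPf p a (x+t) * (1 + (2*u - (x+t))) ^ (IE p a b)))
      (volume.restrict (Ioc 0 t)) := by
    rw [integrable_indicator_iff measurableSet_Ioc, IntegrableOn,
      Measure.restrict_restrict measurableSet_Ioc, inter_eq_self_of_subset_left hss]
    exact hcont
  have hg : Integrable (fun s => Ig p a b R x t s) (volume.restrict (Ioc 0 t)) := by
    unfold Ig
    exact (hind1.add hind2).const_mul _
  have hmono : (∫ s in Ioc (0:ℝ) t, Ifn p a b R x t s)
      ≤ ∫ s in Ioc (0:ℝ) t, Ig p a b R x t s := by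
    apply integral_mono_of_nonneg
    · filter_upwards [ae_restrict_mem measurableSet_Ioc] with s hs
      exact Ifn_nonneg p a b R hR hs.1.le
    · exact hg
    · filter_upwards [ae_restrict_mem measurableSet_Ioc] with s hs
      exact Ifn_le_Ig p a b R hR hx hs
  refine le_trans hmono ?_
  unfold Ig
  rw [integral_const_mul, integral_add hind1 hind2]
  have hT1 : (∫ s in Ioc (0:ℝ) t, (Icc ((x+t-R)/2) ((x+t+R)/2)).indicator
      (fun _ => IK p a R (x+t) * (1+R) ^ max 0 (-(1+b))) s)
      ≤ IK p a R (x+t) * (R * (1+R) ^ max 0 (-(1+b))) := by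
    rw [integral_indicator measurableSet_Icc, setIntegral_const, smul_eq_mul]
    have hm : ((volume.restrict (Ioc (0:ℝ) t)) (Icc ((x+t-R)/2) ((x+t+R)/2))).toReal ≤ R := by
      have h1 : (volume.restrict (Ioc (0:ℝ) t)) (Icc ((x+t-R)/2) ((x+t+R)/2))
          ≤ ENNReal.ofReal R := by
        calc (volume.restrict (Ioc (0:ℝ) t)) (Icc ((x+t-R)/2) ((x+t+R)/2))
            ≤ volume (Icc ((x+t-R)/2) ((x+t+R)/2)) := Measure.restrict_apply_le _ _
          _ = ENNReal.ofReal ((x+t+R)/2 - (x+t-R)/2) := Real.volume_Icc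
          _ = ENNReal.ofReal R := by congr 1; ring
      calc ((volume.restrict (Ioc (0:ℝ) t)) (Icc ((x+t-R)/2) ((x+t+R)/2))).toReal
          ≤ (ENNReal.ofReal R).toReal := ENNReal.toReal_mono (by simp) h1
        _ = R := ENNReal.toReal_ofReal (by linarith)
    have hc : 0 ≤ IK p a R (x+t) * (1+R) ^ max 0 (-(1+b)) :=
      mul_nonneg hIKn (Real.rpow_nonneg (by linarith) _)
    calc ((volume.restrict (Ioc (0:ℝ) t)) (Icc ((x+t-R)/2) ((x+t+R)/2))).toReal
          * (IK p a R (x+t) * (1+R) ^ max 0 (-(1+b)))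
        ≤ R * (IK p a R (x+t) * (1+R) ^ max 0 (-(1+b))) :=
          mul_le_mul_of_nonneg_right hm hc
      _ = IK p a R (x+t) * (R * (1+R) ^ max 0 (-(1+b))) := by ring
  have hT2 : (∫ s in Ioc (0:ℝ) t, (Ioc ((x+t+R)/2) t).indicator
      (fun u => IPf p a (x+t) * (1+(2*u-(x+t))) ^ IE p a b) s)
      ≤ (if R < t - x then IPf p a (x+t) * IPhi p a b (t-x) / 2 else 0) := by
    rw [integral_indicator measurableSet_Ioc,
      Measure.restrict_restrict measurableSet_Ioc, inter_eq_self_of_subset_left hss]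
    by_cases hfar : (x+t+R)/2 < t
    · rw [if_pos (by linarith : R < t - x)]
      rw [← intervalIntegral.integral_of_le hfar.le, intervalIntegral.integral_const_mul]
      have hRδ : 1 + R ≤ 1 + (t - x) := by linarith
      have h0R : (0:ℝ) < 1 + R := by linarith
      have h0δ : (0:ℝ) < 1 + (t-x) := by linarith
      have hnm : (0:ℝ) ∉ Set.uIcc (1+R) (1+(t-x)) := notMem_uIcc_of_lt h0R h0δ
      have hint : (∫ s in ((x+t+R)/2)..t, (1+(2*s-(x+t))) ^ IE p a b)
          ≤ IPhi p a b (t-x) / 2 := by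
        have ee : ∀ s:ℝ, (1 + (2*s - (x+t))) = 2*s + (1-(x+t)) := fun s => by ring
        simp_rw [ee]
        rw [intervalIntegral.integral_comp_mul_add (fun u => u ^ IE p a b)
          (two_ne_zero) (1-(x+t))]
        rw [show 2*((x+t+R)/2)+(1-(x+t)) = 1+R from by ring,
          show (2:ℝ)*t+(1-(x+t)) = 1+(t-x) from by ring]
        rw [smul_eq_mul]
        rw [div_eq_mul_inv, mul_comm (IPhi p a b (t-x))]
        apply mul_le_mul_of_nonneg_left _ (by norm_num : (0:ℝ) ≤ (2:ℝ)⁻¹)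
        -- ∫ u in (1+R)..(1+(t-x)), u ^ E ≤ IPhi p a b (t-x)
        rcases lt_trichotomy (IE p a b) (-1) with hE | hE | hE
        · rw [integral_rpow (Or.inr ⟨ne_of_lt hE, hnm⟩)]
          unfold IPhi
          rw [if_neg (ne_of_lt hE), if_neg (by linarith)]
          have hA : ((1+R):ℝ) ^ (IE p a b + 1) ≤ 1 :=
            Real.rpow_le_one_of_one_le_of_nonpos (by linarith) (by linarith)
          have hB : (0:ℝ) ≤ (1+(t-x)) ^ (IE p a b + 1) := Real.rpow_nonneg (by linarith) _
          rw [div_le_iff_of_neg (by linarith : IE p a b + 1 < 0)]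
          have hc : 1 / (-(IE p a b + 1)) * (IE p a b + 1) = -1 := by
            have hd : (0:ℝ) < -(IE p a b + 1) := by linarith
            field_simp
            rw [div_self (by linarith : IE p a b + 1 ≠ 0)]
          rw [hc]
          linarith
        · rw [hE]
          simp_rw [Real.rpow_neg_one]
          rw [integral_inv hnm]
          unfold IPhi
          rw [if_pos hE]
          rw [Real.log_div (by linarith) (by linarith)]
          have : 0 ≤ Real.log (1+R) := Real.log_nonneg (by linarith)
          linarith
        · rw [integral_rpow (Or.inl hE)]
          unfold IPhi
          rw [if_neg (by linarith), if_pos hE]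
          have hA : (0:ℝ) ≤ ((1+R):ℝ) ^ (IE p a b + 1) := Real.rpow_nonneg (by linarith) _
          gcongr
          · linarith
          · linarith
      calc IPf p a (x+t) * ∫ s in ((x+t+R)/2)..t, (1+(2*s-(x+t))) ^ IE p a b
          ≤ IPf p a (x+t) * (IPhi p a b (t-x) / 2) :=
            mul_le_mul_of_nonneg_left hint hIPfn
        _ = IPf p a (x+t) * IPhi p a b (t-x) / 2 := by ring
    · rw [Ioc_eq_empty hfar, Measure.restrict_empty, integral_zero_measure]
      split_ifs with h
      · exact absurd h (by intro hh; apply hfar; linarith)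
      · exact le_refl 0
  have hL : (0:ℝ) ≤ (1 + (x+t)) ^ (-(1+a)) := Real.rpow_nonneg (by linarith) _
  unfold IM
  exact mul_le_mul_of_nonneg_left (add_le_add hT1 hT2) hL

lemma winv_nonneg {a R x t : ℝ} (hR : 1 ≤ R) (ht : 0 ≤ t) : 0 ≤ (wgt a R x t)⁻¹ :=
  inv_nonneg.mpr (wgt_nonneg hR ht)

/-- far point: `wgt⁻¹ = (1+(t-x))^(-(1+a))` for `-1 ≤ a`. -/
lemma winv_far {a R x t : ℝ} (ha : -1 ≤ a) (hx : 0 ≤ x) (hδ : R < t - x) (hR : 1 ≤ R) :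
    (wgt a R x t)⁻¹ = (1+(t-x)) ^ (-(1+a)) := by
  rw [wgt_eq_of_gt hx hδ, if_pos ha, show (1:ℝ)+t-x = 1+(t-x) from by ring,
    ← Real.rpow_neg (by linarith)]

/-- far point, `a < -1`: `wgt⁻¹ = (1+(x+t))^(-(1+a))`. -/
lemma winv_far' {a R x t : ℝ} (ha : ¬ -1 ≤ a) (hx : 0 ≤ x) (hδ : R < t - x) (hR : 1 ≤ R) :
    (wgt a R x t)⁻¹ = (1+(x+t)) ^ (-(1+a)) := by
  have h0 : (0:ℝ) ≤ 1 + t + x := by linarith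
  rw [wgt_eq_of_gt hx hδ, if_neg ha, ← Real.rpow_neg h0]
  rw [show (1:ℝ)+t+x = 1+(x+t) from by ring]

/-- near point: `wgt⁻¹` explicitly. -/
lemma winv_near {a R x t : ℝ} (hx : 0 ≤ x) (hδ : ¬ R < t - x) (hR : 1 ≤ R) (ht : 0 ≤ t) :
    (wgt a R x t)⁻¹ = if 0 < a then 1 else if a = 0 then Real.log (t+x+R)
      else (t+x+R) ^ (-a) := by
  rw [wgt_eq_of_le hx (not_lt.mp hδ)]
  split_ifs with h1 h2
  · norm_num
  · rw [inv_inv]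
  · rw [← Real.rpow_neg (by linarith : (0:ℝ) ≤ t+x+R)]

/-- `L ≤ wgt⁻¹` whenever `-1 ≤ a`, `a ≠ 0`. -/
lemma L_le_winv {a R x t : ℝ} (ha : -1 ≤ a) (ha0 : a ≠ 0) (hR : 1 ≤ R) (hx : 0 ≤ x)
    (ht : 0 ≤ t) : (1+(x+t)) ^ (-(1+a)) ≤ (wgt a R x t)⁻¹ := by
  have h1β : (1:ℝ) ≤ 1+(x+t) := by linarith
  by_cases hδ : R < t - x
  · rw [winv_far ha hx hδ hR]
    exact Real.rpow_le_rpow_of_nonpos (by linarith) (by linarith) (by linarith)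
  · rw [winv_near hx hδ hR ht]
    have hL1 : (1+(x+t)) ^ (-(1+a)) ≤ 1 :=
      Real.rpow_le_one_of_one_le_of_nonpos h1β (by linarith)
    split_ifs with h1
    · exact hL1
    · refine hL1.trans ?_
      have ha' : a < 0 := lt_of_le_of_ne (not_lt.mp h1) ha0
      rw [show (1:ℝ) = (t+x+R) ^ (0:ℝ) from (Real.rpow_zero _).symm]
      exact Real.rpow_le_rpow_of_exponent_le (by linarith) (by linarith)
  
lemma IPhi_nonneg {p a b δ : ℝ} (hδ : 0 ≤ δ) : 0 ≤ IPhi p a b δ := by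
  unfold IPhi
  split_ifs with h1 h2
  · exact Real.log_nonneg (by linarith)
  · exact div_nonneg (Real.rpow_nonneg (by linarith) _) (by linarith)
  · have : IE p a b < -1 := lt_of_le_of_ne (not_lt.mp h2) h1
    apply div_nonneg (by norm_num) (by linarith)

/-- Generic gluing step: `L·V ≤ K·E·W` from `L ≤ W`, `V ≤ c·E`, `c ≤ K`. -/
lemma far_glue {L W V c K E : ℝ} (hLW : L ≤ W) (hW : 0 ≤ W) (hVn : 0 ≤ V)
    (hval : V ≤ c * E) (hcK : c ≤ K) (hE : 0 ≤ E) : L * V ≤ K * E * W := by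
  calc L * V ≤ W * (c*E) := mul_le_mul hLW hval hVn hW
    _ ≤ W * (K*E) := by
        apply mul_le_mul_of_nonneg_left _ hW
        exact mul_le_mul_of_nonneg_right hcK hE
    _ = K * E * W := by ring

lemma div2_le {A E c : ℝ} (hA : A ≤ E) (hc : 0 < c) : A / c / 2 ≤ 1/(2*c) * E := by
  rw [div_div, div_eq_mul_one_div A (c*2)]
  calc A * (1/(c*2)) ≤ E * (1/(c*2)) := mul_le_mul_of_nonneg_right hA (by positivity)
    _ = 1/(2*c) * E := by ring

lemma le_mul_big {c X : ℝ} (hc : 0 ≤ c) (hX : 1 ≤ X) : c ≤ c * X := by nlinarith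

set_option maxHeartbeats 2000000 in
lemma IM_le (p a b R : ℝ) (hp : 1 < p) (hR : 1 ≤ R) (hreg : Regime p a b) :
    ∃ C : ℝ, 0 < C ∧ ∀ T : ℝ, 0 < T → ∀ x t : ℝ, 0 ≤ x → x ≤ t + R → 0 < t → t ≤ T →
      IM p a b R x t ≤ C * Eab p a b R T * (wgt a R x t)⁻¹ := by
  have hcb : 0 < R * (1+R) ^ (max 0 (-(1+b))) :=
    mul_pos (by linarith) (Real.rpow_pos_of_pos (by linarith) _)
  rcases hreg with ⟨ha, hq⟩ | ⟨ha, hb⟩ | ⟨ha, hq⟩ | ⟨ha, hb⟩ | ⟨hq, hb⟩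
  · -- Regime 1 : 0 < a, 0 < q
    refine ⟨R * (1+R) ^ (max 0 (-(1+b))) + 1/(2*(p*(1+a)+b)), by positivity, ?_⟩
    intro T hT x t hx hxt ht htT
    have hE : Eab p a b R T = 1 := by unfold Eab; rw [if_pos ⟨ha, hq⟩]
    rw [hE, mul_one]
    have hL : (1+(x+t)) ^ (-(1+a)) ≤ (wgt a R x t)⁻¹ :=
      L_le_winv (by linarith) (ne_of_gt ha) hR hx ht.le
    have hIK : IK p a R (x+t) = 1 := by unfold IK; rw [if_pos ha]
    have hIE : IE p a b = -(1+(p*(1+a)+b)) := by unfold IE; rw [if_pos (by linarith)]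
    have hinner : IK p a R (x+t) * (R*(1+R) ^ (max 0 (-(1+b))))
        + (if R < t-x then IPf p a (x+t) * IPhi p a b (t-x) / 2 else 0)
        ≤ R * (1+R) ^ (max 0 (-(1+b))) + 1/(2*(p*(1+a)+b)) := by
      rw [hIK, one_mul]
      apply add_le_add le_rfl
      split_ifs with hδ
      · have hIPf : IPf p a (x+t) = 1 := by unfold IPf; rw [if_pos (by linarith)]
        have hlt : IE p a b < -1 := by rw [hIE]; linarith
        have hPhi : IPhi p a b (t-x) = 1/(-(IE p a b + 1)) := by
          unfold IPhi; rw [if_neg (ne_of_lt hlt), if_neg (not_lt.mpr hlt.le)]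
        rw [hIPf, hPhi, one_mul, hIE]
        rw [show -(-(1+(p*(1+a)+b)) + 1) = p*(1+a)+b from by ring, div_div]
        apply le_of_eq
        congr 1
        ring
      · positivity
    have hin0 : 0 ≤ IK p a R (x+t) * (R*(1+R) ^ (max 0 (-(1+b))))
        + (if R < t-x then IPf p a (x+t) * IPhi p a b (t-x) / 2 else 0) := by
      apply add_nonneg (mul_nonneg (IK_nonneg hR (by linarith)) hcb.le)
      split_ifs with hδ
      · exact div_nonneg (mul_nonneg (IPf_nonneg p a _ (by linarith))
          (IPhi_nonneg (by linarith))) (by norm_num)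
      · exact le_rfl
    calc IM p a b R x t
        ≤ (wgt a R x t)⁻¹ * (R * (1+R) ^ (max 0 (-(1+b))) + 1/(2*(p*(1+a)+b))) := by
          unfold IM
          exact mul_le_mul hL hinner hin0 (winv_nonneg hR ht.le)
      _ = (R * (1+R) ^ (max 0 (-(1+b))) + 1/(2*(p*(1+a)+b))) * (wgt a R x t)⁻¹ := by ring
  · -- Regime 2 : a = 0, -p ≤ b
    subst ha
    have hq' : (0:ℝ) ≤ p + b := by linarith
    refine ⟨R * (1+R) ^ (max 0 (-(1+b))) * 2 ^ p + (1/2 + 1/(2*(p+b))), ?_, ?_⟩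
    · have h1 : (0:ℝ) ≤ 1/(2*(p+b)) := by positivity
      have h2 : (0:ℝ) < R * (1+R) ^ (max 0 (-(1+b))) * 2 ^ p := by positivity
      linarith
    intro T hT x t hx hxt ht htT
    have hQ3 : (3:ℝ) ≤ T + 3*R := by linarith
    have hlogQ3 : 1 ≤ Real.log (T+3*R) := by
      have h3 : Real.exp 1 < 3 := lt_trans Real.exp_one_lt_d9 (by norm_num)
      have := Real.log_lt_log (Real.exp_pos 1) (lt_of_lt_of_le h3 hQ3)
      rw [Real.log_exp] at this
      linarith
    have hℓpos : 0 < Real.log (x+t+R) := Real.log_pos (by linarith)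
    have hℓle : Real.log (x+t+R) ≤ 2 * Real.log (T+3*R) := by
      have h1 : Real.log (x+t+R) ≤ Real.log ((T+3*R)^2) :=
        Real.log_le_log (by linarith) (by nlinarith)
      rwa [Real.log_pow, Nat.cast_ofNat] at h1
    have hEab : Eab p 0 b R T = Real.log (T+3*R) ^ p := by
      unfold Eab
      rw [if_neg (by rintro ⟨h, _⟩; exact lt_irrefl 0 h), if_pos ⟨rfl, hb⟩]
    rw [hEab]
    have hIK : IK p 0 R (x+t) = Real.log (x+t+R) ^ p := by
      unfold IK
      rw [if_neg (lt_irrefl 0), if_pos rfl]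
    have hIE : IE p 0 b = -(1+(p*(1+0)+b)) := by
      unfold IE; rw [if_pos (by norm_num)]
    have hIPf : IPf p 0 (x+t) = 1 := by unfold IPf; rw [if_pos (by norm_num)]
    have hlogp : Real.log (x+t+R) ^ p ≤ 2 ^ p * Real.log (T+3*R) ^ p := by
      calc Real.log (x+t+R) ^ p ≤ (2 * Real.log (T+3*R)) ^ p :=
            Real.rpow_le_rpow hℓpos.le hℓle (by linarith)
        _ = 2 ^ p * Real.log (T+3*R) ^ p :=
            Real.mul_rpow (by norm_num) (by linarith)
    have hE1 : (1:ℝ) ≤ Real.log (T+3*R) ^ p := Real.one_le_rpow hlogQ3 (by linarith)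
    have hL1 : (1+(x+t)) ^ (-(1+(0:ℝ))) ≤ 1 :=
      Real.rpow_le_one_of_one_le_of_nonpos (by linarith) (by norm_num)
    have hLpos : (0:ℝ) < (1+(x+t)) ^ (-(1+(0:ℝ))) := Real.rpow_pos_of_pos (by linarith) _
    -- near part
    have hnear : (1+(x+t)) ^ (-(1+(0:ℝ))) * (IK p 0 R (x+t) * (R*(1+R) ^ (max 0 (-(1+b)))))
        ≤ R * (1+R) ^ (max 0 (-(1+b))) * 2 ^ p * Real.log (T+3*R) ^ p * (wgt 0 R x t)⁻¹ := by
      rw [hIK]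
      by_cases hδ : R < t - x
      · rw [winv_far (by norm_num) hx hδ hR]
        have hLW : (1+(x+t)) ^ (-(1+(0:ℝ))) ≤ (1+(t-x)) ^ (-(1+(0:ℝ))) :=
          Real.rpow_le_rpow_of_nonpos (by linarith) (by linarith) (by norm_num)
        calc (1+(x+t)) ^ (-(1+(0:ℝ))) * (Real.log (x+t+R) ^ p * (R*(1+R) ^ (max 0 (-(1+b)))))
            ≤ (1+(t-x)) ^ (-(1+(0:ℝ))) * ((2 ^ p * Real.log (T+3*R) ^ p) * (R*(1+R) ^ (max 0 (-(1+b))))) := by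
              apply mul_le_mul hLW (mul_le_mul_of_nonneg_right hlogp hcb.le)
                (mul_nonneg (Real.rpow_nonneg hℓpos.le _) hcb.le)
                (Real.rpow_nonneg (by linarith) _)
          _ = R * (1+R) ^ (max 0 (-(1+b))) * 2 ^ p * Real.log (T+3*R) ^ p * (1+(t-x)) ^ (-(1+(0:ℝ))) := by
              ring
      · rw [winv_near hx hδ hR ht.le, if_neg (lt_irrefl 0), if_pos rfl,
          show t+x+R = x+t+R from by ring]
        have hsplit : Real.log (x+t+R) ^ p = Real.log (x+t+R) ^ (p-1) * Real.log (x+t+R) := by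
          have h := Real.rpow_add hℓpos (p-1) 1
          rw [Real.rpow_one] at h
          rw [show p - 1 + 1 = p from by ring] at h
          exact h
        have hstep : Real.log (x+t+R) ^ (p-1) ≤ 2 ^ p * Real.log (T+3*R) ^ p := by
          calc Real.log (x+t+R) ^ (p-1) ≤ (2 * Real.log (T+3*R)) ^ (p-1) :=
                Real.rpow_le_rpow hℓpos.le hℓle (by linarith)
            _ = 2 ^ (p-1) * Real.log (T+3*R) ^ (p-1) :=
                Real.mul_rpow (by norm_num) (by linarith)
            _ ≤ 2 ^ p * Real.log (T+3*R) ^ p := by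
                apply mul_le_mul (Real.rpow_le_rpow_of_exponent_le (by norm_num) (by linarith))
                  (Real.rpow_le_rpow_of_exponent_le (by linarith) (by linarith))
                  (Real.rpow_nonneg (by linarith) _) (Real.rpow_nonneg (by norm_num) _)
        calc (1+(x+t)) ^ (-(1+(0:ℝ))) * (Real.log (x+t+R) ^ p * (R*(1+R) ^ (max 0 (-(1+b)))))
            ≤ 1 * (Real.log (x+t+R) ^ p * (R*(1+R) ^ (max 0 (-(1+b))))) := by
              apply mul_le_mul_of_nonneg_right hL1
                (mul_nonneg (Real.rpow_nonneg hℓpos.le _) hcb.le)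
          _ = Real.log (x+t+R) ^ (p-1) * (Real.log (x+t+R) * (R*(1+R) ^ (max 0 (-(1+b))))) := by
              rw [one_mul, hsplit]; ring
          _ ≤ (2 ^ p * Real.log (T+3*R) ^ p) * (Real.log (x+t+R) * (R*(1+R) ^ (max 0 (-(1+b))))) := by
              apply mul_le_mul_of_nonneg_right hstep
                (mul_nonneg hℓpos.le hcb.le)
          _ = R * (1+R) ^ (max 0 (-(1+b))) * 2 ^ p * Real.log (T+3*R) ^ p * Real.log (x+t+R) := by
              ring
    -- far part
    have hfar : (1+(x+t)) ^ (-(1+(0:ℝ))) *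
        (if R < t-x then IPf p 0 (x+t) * IPhi p 0 b (t-x) / 2 else 0)
        ≤ (1/2 + 1/(2*(p+b))) * Real.log (T+3*R) ^ p * (wgt 0 R x t)⁻¹ := by
      split_ifs with hδ
      · rw [winv_far (by norm_num) hx hδ hR, hIPf, one_mul]
        have hLW : (1+(x+t)) ^ (-(1+(0:ℝ))) ≤ (1+(t-x)) ^ (-(1+(0:ℝ))) :=
          Real.rpow_le_rpow_of_nonpos (by linarith) (by linarith) (by norm_num)
        have hWn : (0:ℝ) ≤ (1+(t-x)) ^ (-(1+(0:ℝ))) := Real.rpow_nonneg (by linarith) _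
        rcases eq_or_lt_of_le hq' with hpb | hpb
        · have hIE1 : IE p 0 b = -1 := by rw [hIE]; rw [show p*(1+0)+b = p+b from by ring, ← hpb]; ring
          have hPhi : IPhi p 0 b (t-x) = Real.log (1+(t-x)) := by
            unfold IPhi; rw [if_pos hIE1]
          rw [hPhi]
          have hlog : Real.log (1+(t-x)) ≤ Real.log (T+3*R) ^ p := by
            calc Real.log (1+(t-x)) ≤ Real.log (T+3*R) :=
                  Real.log_le_log (by linarith) (by linarith)
              _ = Real.log (T+3*R) ^ (1:ℝ) := (Real.rpow_one _).symm
              _ ≤ Real.log (T+3*R) ^ p :=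
                  Real.rpow_le_rpow_of_exponent_le hlogQ3 (by linarith)
          calc (1+(x+t)) ^ (-(1+(0:ℝ))) * (Real.log (1+(t-x)) / 2)
              ≤ (1+(t-x)) ^ (-(1+(0:ℝ))) * (Real.log (T+3*R) ^ p / 2) := by
                apply mul_le_mul hLW (by linarith)
                  (div_nonneg (Real.log_nonneg (by linarith)) (by norm_num)) hWn
            _ = 1/2 * Real.log (T+3*R) ^ p * (1+(t-x)) ^ (-(1+(0:ℝ))) := by ring
            _ ≤ (1/2 + 1/(2*(p+b))) * Real.log (T+3*R) ^ p * (1+(t-x)) ^ (-(1+(0:ℝ))) := by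
                have h1 : (0:ℝ) ≤ 1/(2*(p+b)) := by positivity
                have h2 : (0:ℝ) ≤ Real.log (T+3*R) ^ p := by linarith
                apply mul_le_mul_of_nonneg_right _ hWn
                nlinarith
        · have hIElt : IE p 0 b < -1 := by rw [hIE]; nlinarith
          have hPhi : IPhi p 0 b (t-x) = 1/(-(IE p 0 b + 1)) := by
            unfold IPhi; rw [if_neg (ne_of_lt hIElt), if_neg (not_lt.mpr hIElt.le)]
          rw [hPhi, hIE, show -(-(1+(p*(1+0)+b)) + 1) = p+b from by ring]
          calc (1+(x+t)) ^ (-(1+(0:ℝ))) * (1/(p+b) / 2)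
              ≤ (1+(t-x)) ^ (-(1+(0:ℝ))) * (1/(p+b) / 2) := by
                apply mul_le_mul_of_nonneg_right hLW (by positivity)
            _ = 1/(2*(p+b)) * 1 * (1+(t-x)) ^ (-(1+(0:ℝ))) := by
                rw [mul_one]; rw [div_div]; ring
            _ ≤ (1/2 + 1/(2*(p+b))) * Real.log (T+3*R) ^ p * (1+(t-x)) ^ (-(1+(0:ℝ))) := by
                apply mul_le_mul_of_nonneg_right _ hWn
                apply mul_le_mul (by linarith [one_div_nonneg.mpr (by linarith : (0:ℝ) ≤ 2*(p+b))]) hE1 (by norm_num) (by positivity)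
      · rw [mul_zero]
        have h1 : (0:ℝ) ≤ 1/(2*(p+b)) := by positivity
        have h2 : (0:ℝ) ≤ Real.log (T+3*R) ^ p := by linarith
        have h3 := winv_nonneg (a := 0) (x := x) (t := t) hR ht.le
        positivity
    calc IM p 0 b R x t
        = (1+(x+t)) ^ (-(1+(0:ℝ))) * (IK p 0 R (x+t) * (R*(1+R) ^ (max 0 (-(1+b)))))
          + (1+(x+t)) ^ (-(1+(0:ℝ))) *
            (if R < t-x then IPf p 0 (x+t) * IPhi p 0 b (t-x) / 2 else 0) := by
          unfold IM; ring
      _ ≤ R * (1+R) ^ (max 0 (-(1+b))) * 2 ^ p * Real.log (T+3*R) ^ p * (wgt 0 R x t)⁻¹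
          + (1/2 + 1/(2*(p+b))) * Real.log (T+3*R) ^ p * (wgt 0 R x t)⁻¹ :=
          add_le_add hnear hfar
      _ = (R * (1+R) ^ (max 0 (-(1+b))) * 2 ^ p + (1/2 + 1/(2*(p+b)))) * Real.log (T+3*R) ^ p * (wgt 0 R x t)⁻¹ := by
          ring
  · -- Regime 3 : 0 < a, q = 0
    refine ⟨R * (1+R) ^ (max 0 (-(1+b))) + 1/2, by positivity, ?_⟩
    intro T hT x t hx hxt ht htT
    have hQ3 : (3:ℝ) ≤ T + 3*R := by linarith
    have hlogQ3 : 1 ≤ Real.log (T+3*R) := by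
      have h3 : Real.exp 1 < 3 := lt_trans Real.exp_one_lt_d9 (by norm_num)
      have := Real.log_lt_log (Real.exp_pos 1) (lt_of_lt_of_le h3 hQ3)
      rw [Real.log_exp] at this
      linarith
    have hE : Eab p a b R T = Real.log (T+3*R) := by
      unfold Eab
      rw [if_neg (by rintro ⟨_, h⟩; linarith), if_neg (by rintro ⟨h, _⟩; linarith),
        if_pos ⟨ha, hq⟩]
    rw [hE]
    have hL : (1+(x+t)) ^ (-(1+a)) ≤ (wgt a R x t)⁻¹ :=
      L_le_winv (by linarith) (ne_of_gt ha) hR hx ht.le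
    have hIK : IK p a R (x+t) = 1 := by unfold IK; rw [if_pos ha]
    have hIE : IE p a b = -1 := by unfold IE; rw [if_pos (by linarith), hq]; ring
    have hinner : IK p a R (x+t) * (R*(1+R) ^ (max 0 (-(1+b))))
        + (if R < t-x then IPf p a (x+t) * IPhi p a b (t-x) / 2 else 0)
        ≤ (R * (1+R) ^ (max 0 (-(1+b))) + 1/2) * Real.log (T+3*R) := by
      have hsum : IK p a R (x+t) * (R*(1+R) ^ (max 0 (-(1+b))))
          + (if R < t-x then IPf p a (x+t) * IPhi p a b (t-x) / 2 else 0)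
          ≤ R*(1+R) ^ (max 0 (-(1+b))) + Real.log (T+3*R)/2 := by
        rw [hIK, one_mul]
        apply add_le_add le_rfl
        split_ifs with hδ
        · have hIPf : IPf p a (x+t) = 1 := by unfold IPf; rw [if_pos (by linarith)]
          have hPhi : IPhi p a b (t-x) = Real.log (1+(t-x)) := by
            unfold IPhi; rw [if_pos hIE]
          rw [hIPf, hPhi, one_mul]
          have : Real.log (1+(t-x)) ≤ Real.log (T+3*R) :=
            Real.log_le_log (by linarith) (by linarith)
          linarith
        · positivity
      calc _ ≤ R*(1+R) ^ (max 0 (-(1+b))) + Real.log (T+3*R)/2 := hsum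
        _ ≤ (R * (1+R) ^ (max 0 (-(1+b))) + 1/2) * Real.log (T+3*R) := by nlinarith [hcb.le, hlogQ3]
    have hin0 : 0 ≤ IK p a R (x+t) * (R*(1+R) ^ (max 0 (-(1+b))))
        + (if R < t-x then IPf p a (x+t) * IPhi p a b (t-x) / 2 else 0) := by
      apply add_nonneg (mul_nonneg (IK_nonneg hR (by linarith)) hcb.le)
      split_ifs with hδ
      · exact div_nonneg (mul_nonneg (IPf_nonneg p a _ (by linarith))
          (IPhi_nonneg (by linarith))) (by norm_num)
      · exact le_rfl
    calc IM p a b R x t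
        ≤ (wgt a R x t)⁻¹ * ((R * (1+R) ^ (max 0 (-(1+b))) + 1/2) * Real.log (T+3*R)) := by
          unfold IM
          exact mul_le_mul hL hinner hin0 (winv_nonneg hR ht.le)
      _ = (R * (1+R) ^ (max 0 (-(1+b))) + 1/2) * Real.log (T+3*R) * (wgt a R x t)⁻¹ := by
          ring
  · -- Regime 4 : a < 0, -p ≤ b
    have hap : 0 < -(a*p) := by nlinarith
    have ha0 : a ≠ 0 := by intro h; rw [h] at ha; exact lt_irrefl 0 ha
    refine ⟨R * (1+R) ^ (max 0 (-(1+b))) * (2 ^ (-(a*p)) + 2 ^ (-1-a*p))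
      + ((if p*(1+a)+b = 0 then 0 else 1/(2*|p*(1+a)+b|)) + 1/(2*(-(a*p)))
        + 2 ^ (-(p*(1+a))) * (1/2 + (if b = 0 then 0 else 1/(2*|b|)))), ?_, ?_⟩
    · have hq0 : (0:ℝ) ≤ (if p*(1+a)+b = 0 then 0 else 1/(2*|p*(1+a)+b|)) := by
        split_ifs
        · exact le_rfl
        · exact one_div_nonneg.mpr (by positivity)
      have hb0 : (0:ℝ) ≤ (if b = 0 then 0 else 1/(2*|b|)) := by
        split_ifs
        · exact le_rfl
        · exact one_div_nonneg.mpr (by positivity)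
      have h1 : (0:ℝ) < R * (1+R) ^ (max 0 (-(1+b))) * (2 ^ (-(a*p)) + 2 ^ (-1-a*p)) := by
        apply mul_pos hcb
        have h2 := Real.rpow_pos_of_pos (show (0:ℝ) < 2 by norm_num) (-(a*p))
        have h3 := Real.rpow_pos_of_pos (show (0:ℝ) < 2 by norm_num) (-1-a*p)
        linarith
      have h2 : (0:ℝ) < 1/(2*(-(a*p))) := by positivity
      have h3 : (0:ℝ) ≤ 2 ^ (-(p*(1+a))) * (1/2 + (if b = 0 then 0 else 1/(2*|b|))) :=
        mul_nonneg (Real.rpow_nonneg (by norm_num) _) (by linarith)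
      linarith
    intro T hT x t hx hxt ht htT
    have hq0 : (0:ℝ) ≤ (if p*(1+a)+b = 0 then 0 else 1/(2*|p*(1+a)+b|)) := by
      split_ifs
      · exact le_rfl
      · exact one_div_nonneg.mpr (by positivity)
    have hb0 : (0:ℝ) ≤ (if b = 0 then 0 else 1/(2*|b|)) := by
      split_ifs
      · exact le_rfl
      · exact one_div_nonneg.mpr (by positivity)
    have hQ1 : (1:ℝ) ≤ T+2*R := by linarith
    have hQpos : (0:ℝ) < T+2*R := by linarith
    have hE1 : (1:ℝ) ≤ (T+2*R) ^ (-(a*p)) := Real.one_le_rpow hQ1 hap.le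
    have hEn : (0:ℝ) ≤ (T+2*R) ^ (-(a*p)) := by linarith
    have hEab : Eab p a b R T = (T+2*R) ^ (-(a*p)) := by
      unfold Eab
      rw [if_neg (by rintro ⟨h, _⟩; linarith), if_neg (by rintro ⟨h, _⟩; linarith),
        if_neg (by rintro ⟨h, _⟩; linarith), if_pos ⟨ha, hb⟩]
    rw [hEab]
    have hβR2Q : x+t+R ≤ 2*(T+2*R) := by linarith
    have h1β2Q : 1+(x+t) ≤ 2*(T+2*R) := by linarith
    have hδQ : 1+(t-x) ≤ T+2*R := by linarith
    have hIK : IK p a R (x+t) = (x+t+R) ^ (-(a*p)) := by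
      unfold IK
      rw [if_neg (by linarith), if_neg ha0]
    have hIKle : IK p a R (x+t) ≤ 2 ^ (-(a*p)) * (T+2*R) ^ (-(a*p)) := by
      rw [hIK]
      calc (x+t+R) ^ (-(a*p)) ≤ (2*(T+2*R)) ^ (-(a*p)) :=
            Real.rpow_le_rpow (by linarith) hβR2Q hap.le
        _ = 2 ^ (-(a*p)) * (T+2*R) ^ (-(a*p)) := Real.mul_rpow (by norm_num) (by linarith)
    have hIKn : 0 ≤ IK p a R (x+t) := IK_nonneg hR (by linarith)
    have hwinvn := winv_nonneg (a := a) (x := x) (t := t) hR ht.le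
    have hLn : (0:ℝ) ≤ (1+(x+t)) ^ (-(1+a)) := Real.rpow_nonneg (by linarith) _
    have hc2 : (0:ℝ) ≤ 2 ^ (-(a*p)) := Real.rpow_nonneg (by norm_num) _
    have hc2' : (0:ℝ) ≤ 2 ^ (-1-a*p) := Real.rpow_nonneg (by norm_num) _
    have hVn : (0:ℝ) ≤ IK p a R (x+t) * (R*(1+R) ^ (max 0 (-(1+b)))) :=
      mul_nonneg hIKn hcb.le
    have hval : IK p a R (x+t) * (R*(1+R) ^ (max 0 (-(1+b))))
        ≤ (2 ^ (-(a*p)) * (R*(1+R) ^ (max 0 (-(1+b))))) * (T+2*R) ^ (-(a*p)) := by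
      calc IK p a R (x+t) * (R*(1+R) ^ (max 0 (-(1+b))))
          ≤ (2 ^ (-(a*p)) * (T+2*R) ^ (-(a*p))) * (R*(1+R) ^ (max 0 (-(1+b)))) :=
            mul_le_mul_of_nonneg_right hIKle hcb.le
        _ = (2 ^ (-(a*p)) * (R*(1+R) ^ (max 0 (-(1+b))))) * (T+2*R) ^ (-(a*p)) := by ring
    have hcK : 2 ^ (-(a*p)) * (R*(1+R) ^ (max 0 (-(1+b))))
        ≤ R * (1+R) ^ (max 0 (-(1+b))) * (2 ^ (-(a*p)) + 2 ^ (-1-a*p)) := by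
      nlinarith [hcb.le]
    -- near part
    have hnear : (1+(x+t)) ^ (-(1+a)) * (IK p a R (x+t) * (R*(1+R) ^ (max 0 (-(1+b)))))
        ≤ R * (1+R) ^ (max 0 (-(1+b))) * (2 ^ (-(a*p)) + 2 ^ (-1-a*p))
          * (T+2*R) ^ (-(a*p)) * (wgt a R x t)⁻¹ := by
      by_cases ha1 : -1 ≤ a
      · exact far_glue (L_le_winv ha1 ha0 hR hx ht.le) hwinvn hVn hval hcK hEn
      · push_neg at ha1
        have hma : 0 < -(1+a) := by linarith
        have hm1 : 0 < -1-a*p := by nlinarith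
        by_cases hδ : R < t - x
        · rw [winv_far' (not_le.mpr ha1) hx hδ hR]
          exact far_glue le_rfl hLn hVn hval hcK hEn
        · rw [winv_near hx hδ hR ht.le, if_neg (by linarith), if_neg ha0,
            show t+x+R = x+t+R from by ring]
          have hLle : (1+(x+t)) ^ (-(1+a)) ≤ (x+t+R) ^ (-(1+a)) :=
            Real.rpow_le_rpow (by linarith) (by linarith) hma.le
          have hcomb : (x+t+R) ^ (-(1+a)) * (x+t+R) ^ (-(a*p))
              = (x+t+R) ^ (-1-a*p) * (x+t+R) ^ (-a) := by
            rw [← Real.rpow_add (by linarith : (0:ℝ) < x+t+R),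
              ← Real.rpow_add (by linarith : (0:ℝ) < x+t+R)]
            congr 1
            ring
          have hmid : (x+t+R) ^ (-1-a*p) ≤ 2 ^ (-1-a*p) * (T+2*R) ^ (-(a*p)) := by
            calc (x+t+R) ^ (-1-a*p) ≤ (2*(T+2*R)) ^ (-1-a*p) :=
                  Real.rpow_le_rpow (by linarith) hβR2Q hm1.le
              _ = 2 ^ (-1-a*p) * (T+2*R) ^ (-1-a*p) := Real.mul_rpow (by norm_num) (by linarith)
              _ ≤ 2 ^ (-1-a*p) * (T+2*R) ^ (-(a*p)) := by
                  apply mul_le_mul_of_nonneg_left _ hc2'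
                  exact Real.rpow_le_rpow_of_exponent_le hQ1 (by linarith)
          rw [hIK]
          calc (1+(x+t)) ^ (-(1+a)) * ((x+t+R) ^ (-(a*p)) * (R*(1+R) ^ (max 0 (-(1+b)))))
              ≤ (x+t+R) ^ (-(1+a)) * ((x+t+R) ^ (-(a*p)) * (R*(1+R) ^ (max 0 (-(1+b))))) :=
                mul_le_mul_of_nonneg_right hLle
                  (mul_nonneg (Real.rpow_nonneg (by linarith) _) hcb.le)
            _ = ((x+t+R) ^ (-(1+a)) * (x+t+R) ^ (-(a*p))) * (R*(1+R) ^ (max 0 (-(1+b)))) := by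
                ring
            _ = ((x+t+R) ^ (-1-a*p) * (x+t+R) ^ (-a)) * (R*(1+R) ^ (max 0 (-(1+b)))) := by
                rw [hcomb]
            _ ≤ ((2 ^ (-1-a*p) * (T+2*R) ^ (-(a*p))) * (x+t+R) ^ (-a))
                * (R*(1+R) ^ (max 0 (-(1+b)))) :=
                mul_le_mul_of_nonneg_right
                  (mul_le_mul_of_nonneg_right hmid (Real.rpow_nonneg (by linarith) _)) hcb.le
            _ = R * (1+R) ^ (max 0 (-(1+b))) * 2 ^ (-1-a*p) * (T+2*R) ^ (-(a*p))
                * (x+t+R) ^ (-a) := by ring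
            _ ≤ R * (1+R) ^ (max 0 (-(1+b))) * (2 ^ (-(a*p)) + 2 ^ (-1-a*p))
                * (T+2*R) ^ (-(a*p)) * (x+t+R) ^ (-a) := by
                apply mul_le_mul_of_nonneg_right _ (Real.rpow_nonneg (by linarith) _)
                apply mul_le_mul_of_nonneg_right _ hEn
                nlinarith [hcb.le]
    -- far part
    have hfar : (1+(x+t)) ^ (-(1+a)) *
        (if R < t-x then IPf p a (x+t) * IPhi p a b (t-x) / 2 else 0)
        ≤ ((if p*(1+a)+b = 0 then 0 else 1/(2*|p*(1+a)+b|)) + 1/(2*(-(a*p)))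
          + 2 ^ (-(p*(1+a))) * (1/2 + (if b = 0 then 0 else 1/(2*|b|))))
          * (T+2*R) ^ (-(a*p)) * (wgt a R x t)⁻¹ := by
      have h2' : (0:ℝ) ≤ 1/(2*(-(a*p))) := by positivity
      have h3' : (0:ℝ) ≤ 2 ^ (-(p*(1+a))) * (1/2 + (if b = 0 then 0 else 1/(2*|b|))) :=
        mul_nonneg (Real.rpow_nonneg (by norm_num) _) (by linarith)
      by_cases hδ : R < t - x
      · rw [if_pos hδ]
        have hδ0 : (0:ℝ) < t - x := by linarith
        have hPhin : 0 ≤ IPhi p a b (t-x) := IPhi_nonneg (by linarith)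
        by_cases ha1 : -1 ≤ a
        · -- -1 ≤ a < 0
          rw [winv_far ha1 hx hδ hR]
          have hLW : (1+(x+t)) ^ (-(1+a)) ≤ (1+(t-x)) ^ (-(1+a)) :=
            Real.rpow_le_rpow_of_nonpos (by linarith) (by linarith) (by linarith)
          have hWn : (0:ℝ) ≤ (1+(t-x)) ^ (-(1+a)) := Real.rpow_nonneg (by linarith) _
          have hIPf : IPf p a (x+t) = 1 := by unfold IPf; rw [if_pos ha1]
          have hIE : IE p a b = -(1+(p*(1+a)+b)) := by unfold IE; rw [if_pos ha1]
          rw [hIPf, one_mul]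
          rcases lt_trichotomy (p*(1+a)+b) 0 with hq | hq | hq
          · -- q < 0
            have hgt : -1 < IE p a b := by rw [hIE]; linarith
            have hPhi : IPhi p a b (t-x)
                = (1+(t-x)) ^ (IE p a b + 1) / (IE p a b + 1) := by
              unfold IPhi
              rw [if_neg (by intro h; rw [h] at hgt; exact lt_irrefl _ hgt), if_pos hgt]
            have hIE1 : IE p a b + 1 = -(p*(1+a)+b) := by rw [hIE]; ring
            have hApow : (1+(t-x)) ^ (-(p*(1+a)+b)) ≤ (T+2*R) ^ (-(a*p)) := by
              calc (1+(t-x)) ^ (-(p*(1+a)+b)) ≤ (T+2*R) ^ (-(p*(1+a)+b)) :=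
                    Real.rpow_le_rpow (by linarith) hδQ (by linarith)
                _ ≤ (T+2*R) ^ (-(a*p)) :=
                    Real.rpow_le_rpow_of_exponent_le hQ1 (by nlinarith)
            have hval2 : IPhi p a b (t-x) / 2
                ≤ (1/(2*(-(p*(1+a)+b)))) * (T+2*R) ^ (-(a*p)) := by
              rw [hPhi, hIE1]
              exact div2_le hApow (by linarith)
            apply far_glue hLW hWn (by linarith : (0:ℝ) ≤ IPhi p a b (t-x) / 2) hval2 _ hEn
            rw [if_neg (ne_of_lt hq), abs_of_neg hq]
            linarith
          · -- q = 0
            have hIE1 : IE p a b = -1 := by rw [hIE, hq]; ring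
            have hPhi : IPhi p a b (t-x) = Real.log (1+(t-x)) := by
              unfold IPhi; rw [if_pos hIE1]
            have hlog1 : Real.log (1+(t-x)) ≤ (T+2*R) ^ (-(a*p)) / (-(a*p)) := by
              calc Real.log (1+(t-x)) ≤ (1+(t-x)) ^ (-(a*p)) / (-(a*p)) :=
                    Real.log_le_rpow_div (by linarith) hap
                _ ≤ (T+2*R) ^ (-(a*p)) / (-(a*p)) := by
                    have := Real.rpow_le_rpow (by linarith : (0:ℝ) ≤ 1+(t-x)) hδQ hap.le
                    gcongr
            have hval2 : IPhi p a b (t-x) / 2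
                ≤ (1/(2*(-(a*p)))) * (T+2*R) ^ (-(a*p)) := by
              rw [hPhi]
              have h4 := div2_le (le_refl ((T+2*R) ^ (-(a*p)))) hap
              linarith
            apply far_glue hLW hWn (by linarith : (0:ℝ) ≤ IPhi p a b (t-x) / 2) hval2 _ hEn
            rw [if_pos hq]
            linarith
          · -- q > 0
            have hlt : IE p a b < -1 := by rw [hIE]; linarith
            have hPhi : IPhi p a b (t-x) = 1/(-(IE p a b + 1)) := by
              unfold IPhi; rw [if_neg (ne_of_lt hlt), if_neg (not_lt.mpr hlt.le)]
            have hIE1 : -(IE p a b + 1) = p*(1+a)+b := by rw [hIE]; ring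
            have hval2 : IPhi p a b (t-x) / 2
                ≤ (1/(2*(p*(1+a)+b))) * (T+2*R) ^ (-(a*p)) := by
              rw [hPhi, hIE1]
              exact div2_le hE1 hq
            apply far_glue hLW hWn (by linarith : (0:ℝ) ≤ IPhi p a b (t-x) / 2) hval2 _ hEn
            rw [if_neg (ne_of_gt hq), abs_of_pos hq]
            linarith
        · -- a < -1
          push_neg at ha1
          rw [winv_far' (not_le.mpr ha1) hx hδ hR]
          have hIPf : IPf p a (x+t) = (1+(x+t)) ^ (-(p*(1+a))) := by
            unfold IPf; rw [if_neg (not_le.mpr ha1)]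
          have hIE : IE p a b = -(1+b) := by unfold IE; rw [if_neg (not_le.mpr ha1)]
          have hpa : 0 < -(p*(1+a)) := by nlinarith
          have hIPfle : IPf p a (x+t) ≤ 2 ^ (-(p*(1+a))) * (T+2*R) ^ (-(p*(1+a))) := by
            rw [hIPf]
            calc (1+(x+t)) ^ (-(p*(1+a))) ≤ (2*(T+2*R)) ^ (-(p*(1+a))) :=
                  Real.rpow_le_rpow (by linarith) h1β2Q hpa.le
              _ = 2 ^ (-(p*(1+a))) * (T+2*R) ^ (-(p*(1+a))) :=
                  Real.mul_rpow (by norm_num) (by linarith)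
          have hQp1 : (1:ℝ) ≤ (T+2*R) ^ p := Real.one_le_rpow hQ1 (by linarith)
          have hPhile : IPhi p a b (t-x) / 2
              ≤ (1/2 + (if b = 0 then 0 else 1/(2*|b|))) * (T+2*R) ^ p := by
            rcases lt_trichotomy b 0 with hbs | hbs | hbs
            · -- b < 0 : IE = -(1+b) > -1
              have hgt : -1 < IE p a b := by rw [hIE]; linarith
              have hPhi : IPhi p a b (t-x)
                  = (1+(t-x)) ^ (IE p a b + 1) / (IE p a b + 1) := by
                unfold IPhi
                rw [if_neg (by intro h; rw [h] at hgt; exact lt_irrefl _ hgt), if_pos hgt]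
              have hIE1 : IE p a b + 1 = -b := by rw [hIE]; ring
              have hApow : (1+(t-x)) ^ (-b) ≤ (T+2*R) ^ p := by
                calc (1+(t-x)) ^ (-b) ≤ (T+2*R) ^ (-b) :=
                      Real.rpow_le_rpow (by linarith) hδQ (by linarith)
                  _ ≤ (T+2*R) ^ p := Real.rpow_le_rpow_of_exponent_le hQ1 (by linarith)
              have h5 := div2_le hApow (by linarith : (0:ℝ) < -b)
              rw [hPhi, hIE1]
              rw [if_neg (ne_of_lt hbs), abs_of_neg hbs]
              nlinarith [hQp1]
            · -- b = 0
              have hIE1 : IE p a b = -1 := by rw [hIE, hbs]; ring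
              have hPhi : IPhi p a b (t-x) = Real.log (1+(t-x)) := by
                unfold IPhi; rw [if_pos hIE1]
              have hlog1 : Real.log (1+(t-x)) ≤ (T+2*R) ^ p := by
                calc Real.log (1+(t-x)) ≤ 1+(t-x) := Real.log_le_self (by linarith)
                  _ ≤ T+2*R := hδQ
                  _ = (T+2*R) ^ (1:ℝ) := (Real.rpow_one _).symm
                  _ ≤ (T+2*R) ^ p := Real.rpow_le_rpow_of_exponent_le hQ1 (by linarith)
              rw [hPhi, if_pos hbs]
              nlinarith [hQp1]
            · -- b > 0 : IE < -1
              have hlt : IE p a b < -1 := by rw [hIE]; linarith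
              have hPhi : IPhi p a b (t-x) = 1/(-(IE p a b + 1)) := by
                unfold IPhi; rw [if_neg (ne_of_lt hlt), if_neg (not_lt.mpr hlt.le)]
              have hIE1 : -(IE p a b + 1) = b := by rw [hIE]; ring
              have h5 := div2_le hQp1 hbs
              rw [hPhi, hIE1, if_neg (ne_of_gt hbs), abs_of_pos hbs]
              linarith
          have hQcomb : (T+2*R) ^ (-(p*(1+a))) * (T+2*R) ^ p = (T+2*R) ^ (-(a*p)) := by
            rw [← Real.rpow_add hQpos]
            congr 1
            ring
          have hval2 : IPf p a (x+t) * IPhi p a b (t-x) / 2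
              ≤ (2 ^ (-(p*(1+a))) * (1/2 + (if b = 0 then 0 else 1/(2*|b|))))
                * (T+2*R) ^ (-(a*p)) := by
            have hIPfn' : 0 ≤ IPf p a (x+t) := IPf_nonneg p a _ (by linarith)
            calc IPf p a (x+t) * IPhi p a b (t-x) / 2
                = IPf p a (x+t) * (IPhi p a b (t-x) / 2) := by ring
              _ ≤ (2 ^ (-(p*(1+a))) * (T+2*R) ^ (-(p*(1+a))))
                  * ((1/2 + (if b = 0 then 0 else 1/(2*|b|))) * (T+2*R) ^ p) :=
                  mul_le_mul hIPfle hPhile (by linarith)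
                    (mul_nonneg (Real.rpow_nonneg (by norm_num) _)
                      (Real.rpow_nonneg (by linarith) _))
              _ = (2 ^ (-(p*(1+a))) * (1/2 + (if b = 0 then 0 else 1/(2*|b|))))
                  * ((T+2*R) ^ (-(p*(1+a))) * (T+2*R) ^ p) := by ring
              _ = (2 ^ (-(p*(1+a))) * (1/2 + (if b = 0 then 0 else 1/(2*|b|))))
                  * (T+2*R) ^ (-(a*p)) := by rw [hQcomb]
          apply far_glue le_rfl hLn
            (div_nonneg (mul_nonneg (IPf_nonneg p a _ (by linarith)) hPhin)
              (by norm_num)) hval2 _ hEn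
          linarith
      · rw [if_neg hδ, mul_zero]
        apply mul_nonneg (mul_nonneg _ hEn) hwinvn
        linarith
    calc IM p a b R x t
        = (1+(x+t)) ^ (-(1+a)) * (IK p a R (x+t) * (R*(1+R) ^ (max 0 (-(1+b)))))
          + (1+(x+t)) ^ (-(1+a)) *
            (if R < t-x then IPf p a (x+t) * IPhi p a b (t-x) / 2 else 0) := by
          unfold IM; ring
      _ ≤ _ := add_le_add hnear hfar
      _ = (R * (1+R) ^ (max 0 (-(1+b))) * (2 ^ (-(a*p)) + 2 ^ (-1-a*p))
          + ((if p*(1+a)+b = 0 then 0 else 1/(2*|p*(1+a)+b|)) + 1/(2*(-(a*p)))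
            + 2 ^ (-(p*(1+a))) * (1/2 + (if b = 0 then 0 else 1/(2*|b|)))))
          * (T+2*R) ^ (-(a*p)) * (wgt a R x t)⁻¹ := by ring
  · -- Regime 5 : p(1+a)+b < 0, b < -p
    have hm : 0 < -(p*(1+a))-b := by linarith
    have hbneg : b < 0 := by linarith
    have hp1 : (0:ℝ) < p - 1 := by linarith
    have hε1 : 0 < (-(p*(1+a))-b)/(p-1) := by positivity
    have hε2 : 0 < (-(p*(1+a))-b)/p := by positivity
    have hc2m : (0:ℝ) < 2 ^ (-(p*(1+a))-b) := Real.rpow_pos_of_pos (by norm_num) _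
    have hind1 : (0:ℝ) < 1/((-(p*(1+a))-b)/(p-1)) ^ (p-1) := by
      have := Real.rpow_pos_of_pos hε1 (p-1); positivity
    have hind2 : (0:ℝ) < 1/((-(p*(1+a))-b)/p) ^ p := by
      have := Real.rpow_pos_of_pos hε2 p; positivity
    refine ⟨R * (1+R) ^ (max 0 (-(1+b)))
        * (2 ^ (-(p*(1+a))-b) * (1 + 1/((-(p*(1+a))-b)/(p-1)) ^ (p-1)
            + 1/((-(p*(1+a))-b)/p) ^ p))
      + (1/(2*(-(p*(1+a))-b)) + 2 ^ (-(p*(1+a))) * (1/(2*(-b)))), ?_, ?_⟩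
    · have h1 : (0:ℝ) < 1/(2*(-(p*(1+a))-b)) := one_div_pos.mpr (by linarith)
      have h2 : (0:ℝ) ≤ 2 ^ (-(p*(1+a))) * (1/(2*(-b))) := by
        apply mul_nonneg (Real.rpow_nonneg (by norm_num) _)
        exact one_div_nonneg.mpr (by linarith)
      have h3 : (0:ℝ) < R * (1+R) ^ (max 0 (-(1+b)))
          * (2 ^ (-(p*(1+a))-b) * (1 + 1/((-(p*(1+a))-b)/(p-1)) ^ (p-1)
            + 1/((-(p*(1+a))-b)/p) ^ p)) := by
        apply mul_pos hcb
        apply mul_pos hc2m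
        linarith
      linarith
    intro T hT x t hx hxt ht htT
    have hQ1 : (1:ℝ) ≤ T+2*R := by linarith
    have hQpos : (0:ℝ) < T+2*R := by linarith
    have h2Q1 : (1:ℝ) ≤ 2*(T+2*R) := by linarith
    have hE1 : (1:ℝ) ≤ (T+2*R) ^ (-(p*(1+a))-b) := Real.one_le_rpow hQ1 hm.le
    have hEn : (0:ℝ) ≤ (T+2*R) ^ (-(p*(1+a))-b) := by linarith
    have hEab : Eab p a b R T = (T+2*R) ^ (-(p*(1+a))-b) := by
      unfold Eab
      rw [if_neg (by rintro ⟨_, h⟩; linarith), if_neg (by rintro ⟨_, h⟩; linarith),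
        if_neg (by rintro ⟨_, h⟩; linarith), if_neg (by rintro ⟨_, h⟩; linarith)]
    rw [hEab]
    have hβR2Q : x+t+R ≤ 2*(T+2*R) := by linarith
    have h1β2Q : 1+(x+t) ≤ 2*(T+2*R) := by linarith
    have hδQ : 1+(t-x) ≤ T+2*R := by linarith
    have hIKn : 0 ≤ IK p a R (x+t) := IK_nonneg hR (by linarith)
    have hwinvn := winv_nonneg (a := a) (x := x) (t := t) hR ht.le
    have hLn : (0:ℝ) ≤ (1+(x+t)) ^ (-(1+a)) := Real.rpow_nonneg (by linarith) _
    have hVn : (0:ℝ) ≤ IK p a R (x+t) * (R*(1+R) ^ (max 0 (-(1+b)))) :=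
      mul_nonneg hIKn hcb.le
    -- near part
    have hnear : (1+(x+t)) ^ (-(1+a)) * (IK p a R (x+t) * (R*(1+R) ^ (max 0 (-(1+b)))))
        ≤ R * (1+R) ^ (max 0 (-(1+b)))
          * (2 ^ (-(p*(1+a))-b) * (1 + 1/((-(p*(1+a))-b)/(p-1)) ^ (p-1)
            + 1/((-(p*(1+a))-b)/p) ^ p))
          * (T+2*R) ^ (-(p*(1+a))-b) * (wgt a R x t)⁻¹ := by
      have h2m1 : (1:ℝ) ≤ 2 ^ (-(p*(1+a))-b) := Real.one_le_rpow (by norm_num) hm.le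
      have h2mn : (0:ℝ) ≤ 2 ^ (-(p*(1+a))-b) := by linarith
      rcases lt_trichotomy a 0 with han | han | han
      · -- a < 0
        have hIK : IK p a R (x+t) = (x+t+R) ^ (-(a*p)) := by
          unfold IK
          rw [if_neg (by linarith), if_neg (ne_of_lt han)]
        have hap : (0:ℝ) ≤ -(a*p) := by nlinarith
        have hIKle : IK p a R (x+t) ≤ 2 ^ (-(p*(1+a))-b) * (T+2*R) ^ (-(p*(1+a))-b) := by
          rw [hIK]
          calc (x+t+R) ^ (-(a*p)) ≤ (2*(T+2*R)) ^ (-(a*p)) :=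
                Real.rpow_le_rpow (by linarith) hβR2Q hap
            _ ≤ (2*(T+2*R)) ^ (-(p*(1+a))-b) :=
                Real.rpow_le_rpow_of_exponent_le h2Q1 (by nlinarith)
            _ = 2 ^ (-(p*(1+a))-b) * (T+2*R) ^ (-(p*(1+a))-b) :=
                Real.mul_rpow (by norm_num) (by linarith)
        have hval : IK p a R (x+t) * (R*(1+R) ^ (max 0 (-(1+b))))
            ≤ (2 ^ (-(p*(1+a))-b) * (R*(1+R) ^ (max 0 (-(1+b)))))
              * (T+2*R) ^ (-(p*(1+a))-b) := by
          calc IK p a R (x+t) * (R*(1+R) ^ (max 0 (-(1+b))))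
              ≤ (2 ^ (-(p*(1+a))-b) * (T+2*R) ^ (-(p*(1+a))-b))
                * (R*(1+R) ^ (max 0 (-(1+b)))) :=
                mul_le_mul_of_nonneg_right hIKle hcb.le
            _ = (2 ^ (-(p*(1+a))-b) * (R*(1+R) ^ (max 0 (-(1+b)))))
                * (T+2*R) ^ (-(p*(1+a))-b) := by ring
        have hcK : 2 ^ (-(p*(1+a))-b) * (R*(1+R) ^ (max 0 (-(1+b))))
            ≤ R * (1+R) ^ (max 0 (-(1+b)))
              * (2 ^ (-(p*(1+a))-b) * (1 + 1/((-(p*(1+a))-b)/(p-1)) ^ (p-1)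
                + 1/((-(p*(1+a))-b)/p) ^ p)) := by
          calc 2 ^ (-(p*(1+a))-b) * (R*(1+R) ^ (max 0 (-(1+b))))
              = (R*(1+R) ^ (max 0 (-(1+b)))) * (2 ^ (-(p*(1+a))-b) * 1) := by ring
            _ ≤ (R*(1+R) ^ (max 0 (-(1+b)))) * (2 ^ (-(p*(1+a))-b)
                * (1 + 1/((-(p*(1+a))-b)/(p-1)) ^ (p-1) + 1/((-(p*(1+a))-b)/p) ^ p)) := by
                apply mul_le_mul_of_nonneg_left _ hcb.le
                apply mul_le_mul_of_nonneg_left _ h2mn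
                linarith [hind1.le, hind2.le]
        by_cases ha1 : -1 ≤ a
        · exact far_glue (L_le_winv ha1 (ne_of_lt han) hR hx ht.le) hwinvn hVn hval hcK hEn
        · push_neg at ha1
          have hma : 0 < -(1+a) := by linarith
          have hm1 : 0 < -1-a*p := by nlinarith
          by_cases hδ : R < t - x
          · rw [winv_far' (not_le.mpr ha1) hx hδ hR]
            exact far_glue le_rfl hLn hVn hval hcK hEn
          · rw [winv_near hx hδ hR ht.le, if_neg (by linarith), if_neg (ne_of_lt han),
              show t+x+R = x+t+R from by ring]
            have hLle : (1+(x+t)) ^ (-(1+a)) ≤ (x+t+R) ^ (-(1+a)) :=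
              Real.rpow_le_rpow (by linarith) (by linarith) hma.le
            have hcomb : (x+t+R) ^ (-(1+a)) * (x+t+R) ^ (-(a*p))
                = (x+t+R) ^ (-1-a*p) * (x+t+R) ^ (-a) := by
              rw [← Real.rpow_add (by linarith : (0:ℝ) < x+t+R),
                ← Real.rpow_add (by linarith : (0:ℝ) < x+t+R)]
              congr 1
              ring
            have hmid : (x+t+R) ^ (-1-a*p)
                ≤ 2 ^ (-(p*(1+a))-b) * (T+2*R) ^ (-(p*(1+a))-b) := by
              calc (x+t+R) ^ (-1-a*p) ≤ (2*(T+2*R)) ^ (-1-a*p) :=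
                    Real.rpow_le_rpow (by linarith) hβR2Q hm1.le
                _ ≤ (2*(T+2*R)) ^ (-(p*(1+a))-b) :=
                    Real.rpow_le_rpow_of_exponent_le h2Q1 (by nlinarith)
                _ = 2 ^ (-(p*(1+a))-b) * (T+2*R) ^ (-(p*(1+a))-b) :=
                    Real.mul_rpow (by norm_num) (by linarith)
            rw [hIK]
            calc (1+(x+t)) ^ (-(1+a)) * ((x+t+R) ^ (-(a*p)) * (R*(1+R) ^ (max 0 (-(1+b)))))
                ≤ (x+t+R) ^ (-(1+a)) * ((x+t+R) ^ (-(a*p)) * (R*(1+R) ^ (max 0 (-(1+b))))) :=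
                  mul_le_mul_of_nonneg_right hLle
                    (mul_nonneg (Real.rpow_nonneg (by linarith) _) hcb.le)
              _ = ((x+t+R) ^ (-(1+a)) * (x+t+R) ^ (-(a*p))) * (R*(1+R) ^ (max 0 (-(1+b)))) := by
                  ring
              _ = ((x+t+R) ^ (-1-a*p) * (x+t+R) ^ (-a)) * (R*(1+R) ^ (max 0 (-(1+b)))) := by
                  rw [hcomb]
              _ ≤ ((2 ^ (-(p*(1+a))-b) * (T+2*R) ^ (-(p*(1+a))-b)) * (x+t+R) ^ (-a))
                  * (R*(1+R) ^ (max 0 (-(1+b)))) :=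
                  mul_le_mul_of_nonneg_right
                    (mul_le_mul_of_nonneg_right hmid (Real.rpow_nonneg (by linarith) _)) hcb.le
              _ = (2 ^ (-(p*(1+a))-b) * (R*(1+R) ^ (max 0 (-(1+b)))))
                  * (T+2*R) ^ (-(p*(1+a))-b) * (x+t+R) ^ (-a) := by ring
              _ ≤ R * (1+R) ^ (max 0 (-(1+b)))
                  * (2 ^ (-(p*(1+a))-b) * (1 + 1/((-(p*(1+a))-b)/(p-1)) ^ (p-1)
                    + 1/((-(p*(1+a))-b)/p) ^ p))
                  * (T+2*R) ^ (-(p*(1+a))-b) * (x+t+R) ^ (-a) := by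
                  apply mul_le_mul_of_nonneg_right _ (Real.rpow_nonneg (by linarith) _)
                  exact mul_le_mul_of_nonneg_right hcK hEn
      · -- a = 0
        subst han
        have hℓpos : 0 < Real.log (x+t+R) := Real.log_pos (by linarith)
        have hIK : IK p 0 R (x+t) = Real.log (x+t+R) ^ p := by
          unfold IK
          rw [if_neg (lt_irrefl 0), if_pos rfl]
        have hbase : (0:ℝ) < x+t+R := by linarith
        have h2Qpos : (0:ℝ) < 2*(T+2*R) := by linarith
        by_cases hδ : R < t - x
        · -- far point
          rw [winv_far (by norm_num) hx hδ hR]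
          have hLW : (1+(x+t)) ^ (-(1+(0:ℝ))) ≤ (1+(t-x)) ^ (-(1+(0:ℝ))) :=
            Real.rpow_le_rpow_of_nonpos (by linarith) (by linarith) (by norm_num)
          have hWn : (0:ℝ) ≤ (1+(t-x)) ^ (-(1+(0:ℝ))) := Real.rpow_nonneg (by linarith) _
          have hεp : ((-(p*(1+0))-b)/p) * p = -(p*(1+0))-b :=
            div_mul_cancel₀ _ (by linarith)
          have hstep : Real.log (x+t+R) ^ p
              ≤ 2 ^ (-(p*(1+0))-b) * (T+2*R) ^ (-(p*(1+0))-b)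
                * (1/((-(p*(1+0))-b)/p) ^ p) := by
            have h1 : Real.log (x+t+R) ≤ (2*(T+2*R)) ^ ((-(p*(1+0))-b)/p) / ((-(p*(1+0))-b)/p) := by
              calc Real.log (x+t+R) ≤ (x+t+R) ^ ((-(p*(1+0))-b)/p) / ((-(p*(1+0))-b)/p) :=
                    Real.log_le_rpow_div (by linarith) hε2
                _ ≤ (2*(T+2*R)) ^ ((-(p*(1+0))-b)/p) / ((-(p*(1+0))-b)/p) := by
                    have := Real.rpow_le_rpow hbase.le hβR2Q hε2.le
                    gcongr
            calc Real.log (x+t+R) ^ p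
                ≤ ((2*(T+2*R)) ^ ((-(p*(1+0))-b)/p) / ((-(p*(1+0))-b)/p)) ^ p :=
                  Real.rpow_le_rpow hℓpos.le h1 (by linarith)
              _ = ((2*(T+2*R)) ^ ((-(p*(1+0))-b)/p)) ^ p / ((-(p*(1+0))-b)/p) ^ p :=
                  Real.div_rpow (Real.rpow_nonneg h2Qpos.le _) hε2.le _
              _ = (2*(T+2*R)) ^ (-(p*(1+0))-b) / ((-(p*(1+0))-b)/p) ^ p := by
                  rw [← Real.rpow_mul h2Qpos.le, hεp]
              _ = 2 ^ (-(p*(1+0))-b) * (T+2*R) ^ (-(p*(1+0))-b)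
                  * (1/((-(p*(1+0))-b)/p) ^ p) := by
                  rw [Real.mul_rpow (by norm_num) (by linarith)]
                  ring
          have hval : IK p 0 R (x+t) * (R*(1+R) ^ (max 0 (-(1+b))))
              ≤ (R * (1+R) ^ (max 0 (-(1+b))) * (2 ^ (-(p*(1+0))-b) * (1/((-(p*(1+0))-b)/p) ^ p)))
                * (T+2*R) ^ (-(p*(1+0))-b) := by
            rw [hIK]
            calc Real.log (x+t+R) ^ p * (R*(1+R) ^ (max 0 (-(1+b))))
                ≤ (2 ^ (-(p*(1+0))-b) * (T+2*R) ^ (-(p*(1+0))-b) * (1/((-(p*(1+0))-b)/p) ^ p))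
                  * (R*(1+R) ^ (max 0 (-(1+b)))) :=
                  mul_le_mul_of_nonneg_right hstep hcb.le
              _ = (R * (1+R) ^ (max 0 (-(1+b))) * (2 ^ (-(p*(1+0))-b) * (1/((-(p*(1+0))-b)/p) ^ p)))
                  * (T+2*R) ^ (-(p*(1+0))-b) := by ring
          apply far_glue hLW hWn hVn hval _ hEn
          apply mul_le_mul_of_nonneg_left _ hcb.le
          apply mul_le_mul_of_nonneg_left _ h2mn
          linarith [hind1.le]
        · -- near point
          rw [winv_near hx hδ hR ht.le, if_neg (lt_irrefl 0), if_pos rfl,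
            show t+x+R = x+t+R from by ring]
          have hL1 : (1+(x+t)) ^ (-(1+(0:ℝ))) ≤ 1 :=
            Real.rpow_le_one_of_one_le_of_nonpos (by linarith) (by norm_num)
          have hsplit : Real.log (x+t+R) ^ p
              = Real.log (x+t+R) ^ (p-1) * Real.log (x+t+R) := by
            have h := Real.rpow_add hℓpos (p-1) 1
            rw [Real.rpow_one] at h
            rw [show p - 1 + 1 = p from by ring] at h
            exact h
          have hεp : ((-(p*(1+0))-b)/(p-1)) * (p-1) = -(p*(1+0))-b :=
            div_mul_cancel₀ _ (by linarith)
          have hstep : Real.log (x+t+R) ^ (p-1)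
              ≤ 2 ^ (-(p*(1+0))-b) * (T+2*R) ^ (-(p*(1+0))-b)
                * (1/((-(p*(1+0))-b)/(p-1)) ^ (p-1)) := by
            have h2Qpos : (0:ℝ) < 2*(T+2*R) := by linarith
            have h1 : Real.log (x+t+R)
                ≤ (2*(T+2*R)) ^ ((-(p*(1+0))-b)/(p-1)) / ((-(p*(1+0))-b)/(p-1)) := by
              calc Real.log (x+t+R)
                  ≤ (x+t+R) ^ ((-(p*(1+0))-b)/(p-1)) / ((-(p*(1+0))-b)/(p-1)) :=
                    Real.log_le_rpow_div (by linarith) hε1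
                _ ≤ (2*(T+2*R)) ^ ((-(p*(1+0))-b)/(p-1)) / ((-(p*(1+0))-b)/(p-1)) := by
                    have := Real.rpow_le_rpow (by linarith : (0:ℝ) ≤ x+t+R) hβR2Q hε1.le
                    gcongr
            calc Real.log (x+t+R) ^ (p-1)
                ≤ ((2*(T+2*R)) ^ ((-(p*(1+0))-b)/(p-1)) / ((-(p*(1+0))-b)/(p-1))) ^ (p-1) :=
                  Real.rpow_le_rpow hℓpos.le h1 (by linarith)
              _ = ((2*(T+2*R)) ^ ((-(p*(1+0))-b)/(p-1))) ^ (p-1) / ((-(p*(1+0))-b)/(p-1)) ^ (p-1) :=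
                  Real.div_rpow (Real.rpow_nonneg h2Qpos.le _) hε1.le _
              _ = (2*(T+2*R)) ^ (-(p*(1+0))-b) / ((-(p*(1+0))-b)/(p-1)) ^ (p-1) := by
                  rw [← Real.rpow_mul h2Qpos.le, hεp]
              _ = 2 ^ (-(p*(1+0))-b) * (T+2*R) ^ (-(p*(1+0))-b)
                  * (1/((-(p*(1+0))-b)/(p-1)) ^ (p-1)) := by
                  rw [Real.mul_rpow (by norm_num) (by linarith)]
                  ring
          rw [hIK]
          calc (1+(x+t)) ^ (-(1+(0:ℝ))) * (Real.log (x+t+R) ^ p * (R*(1+R) ^ (max 0 (-(1+b)))))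
              ≤ 1 * (Real.log (x+t+R) ^ p * (R*(1+R) ^ (max 0 (-(1+b))))) :=
                mul_le_mul_of_nonneg_right hL1
                  (mul_nonneg (Real.rpow_nonneg hℓpos.le _) hcb.le)
            _ = Real.log (x+t+R) ^ (p-1) * (Real.log (x+t+R) * (R*(1+R) ^ (max 0 (-(1+b))))) := by
                rw [one_mul, hsplit]; ring
            _ ≤ (2 ^ (-(p*(1+0))-b) * (T+2*R) ^ (-(p*(1+0))-b)
                  * (1/((-(p*(1+0))-b)/(p-1)) ^ (p-1)))
                * (Real.log (x+t+R) * (R*(1+R) ^ (max 0 (-(1+b))))) :=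
                mul_le_mul_of_nonneg_right hstep (mul_nonneg hℓpos.le hcb.le)
            _ = (R * (1+R) ^ (max 0 (-(1+b))) * (2 ^ (-(p*(1+0))-b)
                  * (1/((-(p*(1+0))-b)/(p-1)) ^ (p-1))))
                * (T+2*R) ^ (-(p*(1+0))-b) * Real.log (x+t+R) := by ring
            _ ≤ R * (1+R) ^ (max 0 (-(1+b)))
                * (2 ^ (-(p*(1+0))-b) * (1 + 1/((-(p*(1+0))-b)/(p-1)) ^ (p-1)
                  + 1/((-(p*(1+0))-b)/p) ^ p))
                * (T+2*R) ^ (-(p*(1+0))-b) * Real.log (x+t+R) := by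
                apply mul_le_mul_of_nonneg_right _ hℓpos.le
                apply mul_le_mul_of_nonneg_right _ hEn
                apply mul_le_mul_of_nonneg_left _ hcb.le
                apply mul_le_mul_of_nonneg_left _ h2mn
                linarith [hind2.le]
      · -- a > 0
        have hIK : IK p a R (x+t) = 1 := by unfold IK; rw [if_pos han]
        have hval : IK p a R (x+t) * (R*(1+R) ^ (max 0 (-(1+b))))
            ≤ (R*(1+R) ^ (max 0 (-(1+b)))) * (T+2*R) ^ (-(p*(1+a))-b) := by
          rw [hIK, one_mul]
          exact le_mul_big hcb.le hE1
        apply far_glue (L_le_winv (by linarith) (ne_of_gt han) hR hx ht.le)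
          hwinvn hVn hval _ hEn
        apply le_mul_big hcb.le
        calc (1:ℝ) = 1 * 1 := by ring
          _ ≤ 2 ^ (-(p*(1+a))-b) * (1 + 1/((-(p*(1+a))-b)/(p-1)) ^ (p-1)
              + 1/((-(p*(1+a))-b)/p) ^ p) :=
            mul_le_mul h2m1 (by linarith [hind1.le, hind2.le]) (by norm_num) h2mn
    -- far part
    have hfar : (1+(x+t)) ^ (-(1+a)) *
        (if R < t-x then IPf p a (x+t) * IPhi p a b (t-x) / 2 else 0)
        ≤ (1/(2*(-(p*(1+a))-b)) + 2 ^ (-(p*(1+a))) * (1/(2*(-b))))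
          * (T+2*R) ^ (-(p*(1+a))-b) * (wgt a R x t)⁻¹ := by
      have h2' : (0:ℝ) ≤ 1/(2*(-(p*(1+a))-b)) := one_div_nonneg.mpr (by linarith)
      have h3' : (0:ℝ) ≤ 2 ^ (-(p*(1+a))) * (1/(2*(-b))) := by
        apply mul_nonneg (Real.rpow_nonneg (by norm_num) _)
        exact one_div_nonneg.mpr (by linarith)
      by_cases hδ : R < t - x
      · rw [if_pos hδ]
        have hδ0 : (0:ℝ) < t - x := by linarith
        have hPhin : 0 ≤ IPhi p a b (t-x) := IPhi_nonneg (by linarith)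
        by_cases ha1 : -1 ≤ a
        · rw [winv_far ha1 hx hδ hR]
          have hLW : (1+(x+t)) ^ (-(1+a)) ≤ (1+(t-x)) ^ (-(1+a)) :=
            Real.rpow_le_rpow_of_nonpos (by linarith) (by linarith) (by linarith)
          have hWn : (0:ℝ) ≤ (1+(t-x)) ^ (-(1+a)) := Real.rpow_nonneg (by linarith) _
          have hIPf : IPf p a (x+t) = 1 := by unfold IPf; rw [if_pos ha1]
          have hIE : IE p a b = -(1+(p*(1+a)+b)) := by unfold IE; rw [if_pos ha1]
          rw [hIPf, one_mul]
          have hgt : -1 < IE p a b := by rw [hIE]; linarith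
          have hPhi : IPhi p a b (t-x)
              = (1+(t-x)) ^ (IE p a b + 1) / (IE p a b + 1) := by
            unfold IPhi
            rw [if_neg (by intro h; rw [h] at hgt; exact lt_irrefl _ hgt), if_pos hgt]
          have hIE1 : IE p a b + 1 = -(p*(1+a))-b := by rw [hIE]; ring
          have hApow : (1+(t-x)) ^ (-(p*(1+a))-b) ≤ (T+2*R) ^ (-(p*(1+a))-b) :=
            Real.rpow_le_rpow (by linarith) hδQ hm.le
          have hval2 : IPhi p a b (t-x) / 2
              ≤ (1/(2*(-(p*(1+a))-b))) * (T+2*R) ^ (-(p*(1+a))-b) := by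
            rw [hPhi, hIE1]
            exact div2_le hApow hm
          apply far_glue hLW hWn (by linarith : (0:ℝ) ≤ IPhi p a b (t-x) / 2) hval2 _ hEn
          linarith
        · rw [winv_far' ha1 hx hδ hR]
          have hIPf : IPf p a (x+t) = (1+(x+t)) ^ (-(p*(1+a))) := by
            unfold IPf; rw [if_neg ha1]
          have hIE : IE p a b = -(1+b) := by unfold IE; rw [if_neg ha1]
          push_neg at ha1
          have hpa : 0 < -(p*(1+a)) := by nlinarith
          have hIPfle : IPf p a (x+t) ≤ 2 ^ (-(p*(1+a))) * (T+2*R) ^ (-(p*(1+a))) := by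
            rw [hIPf]
            calc (1+(x+t)) ^ (-(p*(1+a))) ≤ (2*(T+2*R)) ^ (-(p*(1+a))) :=
                  Real.rpow_le_rpow (by linarith) h1β2Q hpa.le
              _ = 2 ^ (-(p*(1+a))) * (T+2*R) ^ (-(p*(1+a))) :=
                  Real.mul_rpow (by norm_num) (by linarith)
          have hgt : -1 < IE p a b := by rw [hIE]; linarith
          have hPhi : IPhi p a b (t-x)
              = (1+(t-x)) ^ (IE p a b + 1) / (IE p a b + 1) := by
            unfold IPhi
            rw [if_neg (by intro h; rw [h] at hgt; exact lt_irrefl _ hgt), if_pos hgt]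
          have hIE1 : IE p a b + 1 = -b := by rw [hIE]; ring
          have hApow : (1+(t-x)) ^ (-b) ≤ (T+2*R) ^ (-b) :=
            Real.rpow_le_rpow (by linarith) hδQ (by linarith)
          have hval2a : IPhi p a b (t-x) / 2 ≤ (1/(2*(-b))) * (T+2*R) ^ (-b) := by
            rw [hPhi, hIE1]
            exact div2_le hApow (by linarith)
          have hQcomb : (T+2*R) ^ (-(p*(1+a))) * (T+2*R) ^ (-b)
              = (T+2*R) ^ (-(p*(1+a))-b) := by
            rw [← Real.rpow_add hQpos]
            congr 1
          have hval2 : IPf p a (x+t) * IPhi p a b (t-x) / 2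
              ≤ (2 ^ (-(p*(1+a))) * (1/(2*(-b)))) * (T+2*R) ^ (-(p*(1+a))-b) := by
            calc IPf p a (x+t) * IPhi p a b (t-x) / 2
                = IPf p a (x+t) * (IPhi p a b (t-x) / 2) := by ring
              _ ≤ (2 ^ (-(p*(1+a))) * (T+2*R) ^ (-(p*(1+a))))
                  * ((1/(2*(-b))) * (T+2*R) ^ (-b)) :=
                  mul_le_mul hIPfle hval2a (by linarith)
                    (mul_nonneg (Real.rpow_nonneg (by norm_num) _)
                      (Real.rpow_nonneg (by linarith) _))
              _ = (2 ^ (-(p*(1+a))) * (1/(2*(-b))))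
                  * ((T+2*R) ^ (-(p*(1+a))) * (T+2*R) ^ (-b)) := by ring
              _ = (2 ^ (-(p*(1+a))) * (1/(2*(-b)))) * (T+2*R) ^ (-(p*(1+a))-b) := by
                  rw [hQcomb]
          apply far_glue le_rfl hLn
            (div_nonneg (mul_nonneg (IPf_nonneg p a _ (by linarith)) hPhin)
              (by norm_num)) hval2 _ hEn
          linarith
      · rw [if_neg hδ, mul_zero]
        apply mul_nonneg (mul_nonneg (by linarith) hEn) hwinvn
    calc IM p a b R x t
        = (1+(x+t)) ^ (-(1+a)) * (IK p a R (x+t) * (R*(1+R) ^ (max 0 (-(1+b)))))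
          + (1+(x+t)) ^ (-(1+a)) *
            (if R < t-x then IPf p a (x+t) * IPhi p a b (t-x) / 2 else 0) := by
          unfold IM; ring
      _ ≤ _ := add_le_add hnear hfar
      _ = (R * (1+R) ^ (max 0 (-(1+b)))
          * (2 ^ (-(p*(1+a))-b) * (1 + 1/((-(p*(1+a))-b)/(p-1)) ^ (p-1)
            + 1/((-(p*(1+a))-b)/p) ^ p))
          + (1/(2*(-(p*(1+a))-b)) + 2 ^ (-(p*(1+a))) * (1/(2*(-b)))))
          * (T+2*R) ^ (-(p*(1+a))-b) * (wgt a R x t)⁻¹ := by ring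

lemma Eab_nonneg {p a b R T : ℝ} (hR : 1 ≤ R) (hT : 0 < T) : 0 ≤ Eab p a b R T := by
  unfold Eab
  split_ifs
  · norm_num
  · exact Real.rpow_nonneg (Real.log_nonneg (by linarith)) _
  · exact Real.log_nonneg (by linarith)
  · exact Real.rpow_nonneg (by linarith) _
  · exact Real.rpow_nonneg (by linarith) _


theorem Iplus_estimate (p a b R : ℝ) (hp : 1 < p) (hR : 1 ≤ R)
    (hreg : Regime p a b) :
    ∃ C : ℝ, 0 < C ∧ ∀ T : ℝ, 0 < T → ∀ x t : ℝ,
      0 ≤ x → x ≤ t + R → 0 ≤ t → t ≤ T →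
      Iplus p a b R x t ≤ C * Eab p a b R T * (wgt a R x t)⁻¹ := by
  obtain ⟨C, hC, hbound⟩ := IM_le p a b R hp hR hreg
  refine ⟨C, hC, ?_⟩
  intro T hT x t hx hxt ht htT
  rcases eq_or_lt_of_le ht with h0 | h0
  · have hz : Iplus p a b R x t = 0 := by
      rw [← h0]
      exact intervalIntegral.integral_same
    rw [hz]
    have h1 := Eab_nonneg (p := p) (a := a) (b := b) hR hT
    have h2 := winv_nonneg (a := a) (R := R) (x := x) (t := t) hR ht
    positivity
  · exact le_trans (Iplus_le_IM p a b R hR hx h0) (hbound T hT x t hx hxt h0 htT)
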